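/- arXiv:1905.08326 — 6 statements merged into one kernel-verified Lean document; each statement's English description precedes it below -/
import Mathlib

section
/- The pure twin group \(\overline{P}_6\) is not a free group: there is no set \(X\) such that \(\overline{P}_6\) is isomorphic to the free group on \(X\). -/
/-- The defining relations of the twin (planar braid) group on `n + 1` strands,
with generators `σ₁, …, σ_n` indexed by `Fin n`: the squares of the generators
and the commutators of pairs of generators at distance greater than one. -/
def twinRels (n : ℕ) : Set (FreeGroup (Fin n)) :=
  {r | (∃ i : Fin n, r = .of i * .of i) ∨
    ∃ i j : Fin n, (i : ℕ) + 1 < (j : ℕ) ∧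
      r = .of i * .of j * (.of i)⁻¹ * (.of j)⁻¹}

/-- The twin (planar braid) group `B̄_{n+1}` on `n + 1` strands. -/
abbrev TwinGroup (n : ℕ) := PresentedGroup (twinRels n)

theorem twinRels_hold (n : ℕ) :
    ∀ r ∈ twinRels n,
      FreeGroup.lift (fun i : Fin n => Equiv.swap (i.castSucc) (i.succ)) r = 1 := by
  rintro r (⟨i, rfl⟩ | ⟨i, j, hij, rfl⟩)
  · simp only [map_mul, FreeGroup.lift_apply_of]
    exact Equiv.swap_mul_self _ _
  · simp only [map_mul, map_inv, FreeGroup.lift_apply_of]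
    have hd : (Equiv.swap (i.castSucc) (i.succ)).Disjoint
        (Equiv.swap (j.castSucc) (j.succ)) := by
      intro x
      by_cases h1 : x = i.castSucc
      · right; subst h1
        apply Equiv.swap_apply_of_ne_of_ne <;> simp [Fin.ext_iff] <;> omega
      by_cases h2 : x = i.succ
      · right; subst h2
        apply Equiv.swap_apply_of_ne_of_ne <;> simp [Fin.ext_iff] <;> omega
      · left; exact Equiv.swap_apply_of_ne_of_ne h1 h2
    rw [hd.commute.eq]
    group

/-- The permutation homomorphism of the twin group on `n + 1` strands,
sending `σ_i` to the adjacent transposition `(i, i+1)`. -/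
def twinPerm (n : ℕ) : TwinGroup n →* Equiv.Perm (Fin (n + 1)) :=
  PresentedGroup.toGroup (twinRels_hold n)
noncomputable section

/-- Reflection `x ↦ -x` of `ℤ`. -/
def twinR1 : Equiv.Perm ℤ := Equiv.neg ℤ

/-- Reflection `x ↦ 1 - x` of `ℤ`. -/
def twinR2 : Equiv.Perm ℤ := (Equiv.neg ℤ).trans (Equiv.addLeft 1)

@[simp] lemma twinR1_apply (x : ℤ) : twinR1 x = -x := rfl
@[simp] lemma twinR2_apply (x : ℤ) : twinR2 x = 1 + -x := rfl

/-- Images of the twin generators in `Perm ℤ × Perm ℤ`. -/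
def twinT : Fin 5 → Equiv.Perm ℤ × Equiv.Perm ℤ :=
  ![(twinR1, 1), (twinR2, 1), 1, (1, twinR1), (1, twinR2)]

lemma twinT_rels : ∀ r ∈ twinRels 5, FreeGroup.lift twinT r = 1 := by
  have hsq : ∀ i : Fin 5, twinT i * twinT i = 1 := by
    intro i
    fin_cases i <;>
      refine Prod.ext ?_ ?_ <;>
      · show _ = _
        first
        | rfl
        | · ext x
            simp [twinT, twinR1, twinR2, Equiv.Perm.mul_apply]
  have hcomm : ∀ i j : Fin 5, (i : ℕ) + 1 < (j : ℕ) → twinT i * twinT j = twinT j * twinT i := by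
    intro i j hij
    fin_cases i <;> fin_cases j <;>
      first
      | (exfalso; revert hij; decide)
      | (refine Prod.ext ?_ ?_ <;> simp [twinT])
  rintro r (⟨i, rfl⟩ | ⟨i, j, hij, rfl⟩)
  · simp only [map_mul, FreeGroup.lift_apply_of]
    exact hsq i
  · simp only [map_mul, map_inv, FreeGroup.lift_apply_of]
    rw [(Commute.eq (hcomm i j hij))]
    group


/-- The dihedral representation of the twin group on 6 strands. -/
def twinF : TwinGroup 5 →* Equiv.Perm ℤ × Equiv.Perm ℤ :=
  PresentedGroup.toGroup twinT_rels

/-- `a = (σ₁ σ₂)³`. -/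
def twinA : TwinGroup 5 := (PresentedGroup.of 0 * PresentedGroup.of 1) ^ 3

/-- `b = (σ₄ σ₅)³`. -/
def twinB : TwinGroup 5 := (PresentedGroup.of 3 * PresentedGroup.of 4) ^ 3

lemma twin_of_comm {i j : Fin 5} (h : (i : ℕ) + 1 < (j : ℕ)) :
    Commute (PresentedGroup.of (rels := twinRels 5) i) (PresentedGroup.of j) := by
  rw [← commutatorElement_eq_one_iff_commute, commutatorElement_def]
  have hmem : (FreeGroup.of i * FreeGroup.of j * (FreeGroup.of i)⁻¹ * (FreeGroup.of j)⁻¹ :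
      FreeGroup (Fin 5)) ∈ Subgroup.normalClosure (twinRels 5) :=
    Subgroup.subset_normalClosure (Or.inr ⟨i, j, h, rfl⟩)
  have : PresentedGroup.mk (twinRels 5)
      (FreeGroup.of i * FreeGroup.of j * (FreeGroup.of i)⁻¹ * (FreeGroup.of j)⁻¹) = 1 :=
    (QuotientGroup.eq_one_iff _).2 hmem
  rw [map_mul, map_mul, map_mul, map_inv, map_inv] at this
  exact this

lemma twinA_comm_twinB : Commute twinA twinB := by
  apply Commute.pow_pow
  have h03 := twin_of_comm (i := 0) (j := 3) (by decide)
  have h04 := twin_of_comm (i := 0) (j := 4) (by decide)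
  have h13 := twin_of_comm (i := 1) (j := 3) (by decide)
  have h14 := twin_of_comm (i := 1) (j := 4) (by decide)
  exact (h03.mul_right h04).mul_left (h13.mul_right h14)

lemma twinRmul : twinR1 * twinR2 = Equiv.addRight (-1 : ℤ) := by
  ext x
  simp [twinR1, twinR2, Equiv.Perm.mul_apply]

lemma twinF_A : twinF twinA = ((Equiv.addRight (-3 : ℤ)), 1) := by
  have : twinF twinA = ((twinR1 * twinR2) ^ 3, 1) := by
    rw [twinA, map_pow, map_mul]
    simp only [twinF, PresentedGroup.toGroup.of]
    rw [show twinT 0 = (twinR1, 1) from rfl, show twinT 1 = (twinR2, 1) from rfl]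
    simp [Prod.pow_def]
  rw [this, twinRmul]
  refine Prod.ext ?_ rfl
  show _ = _
  rw [show Equiv.addRight (-1 : ℤ) ^ 3 = Equiv.addRight (-3) by ext x; simp [pow_succ]; omega]

lemma twinF_B : twinF twinB = (1, (Equiv.addRight (-3 : ℤ))) := by
  have : twinF twinB = (1, (twinR1 * twinR2) ^ 3) := by
    rw [twinB, map_pow, map_mul]
    simp only [twinF, PresentedGroup.toGroup.of]
    rw [show twinT 3 = (1, twinR1) from rfl, show twinT 4 = (1, twinR2) from rfl]
    simp [Prod.pow_def]
  rw [this, twinRmul]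
  refine Prod.ext rfl ?_
  show _ = _
  rw [show Equiv.addRight (-1 : ℤ) ^ 3 = Equiv.addRight (-3) by ext x; simp [pow_succ]; omega]

lemma twin_indep : ∀ m n : ℤ, twinA ^ m * twinB ^ n = 1 → m = 0 ∧ n = 0 := by
  intro m n h
  have hh : ((Equiv.addRight (-3 : ℤ), (1 : Equiv.Perm ℤ))) ^ m *
      (((1 : Equiv.Perm ℤ), Equiv.addRight (-3 : ℤ))) ^ n = 1 := by
    rw [← twinF_A, ← twinF_B, ← map_zpow, ← map_zpow, ← map_mul, h, map_one]
  constructor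
  · have h1 : (Equiv.addRight (-3 : ℤ)) ^ m * (1 : Equiv.Perm ℤ) ^ n = 1 :=
      congrArg Prod.fst hh
    have := congrArg (fun e : Equiv.Perm ℤ => e 0) h1
    simp [smul_eq_mul] at this
    omega
  · have h2 : (1 : Equiv.Perm ℤ) ^ m * (Equiv.addRight (-3 : ℤ)) ^ n = 1 :=
      congrArg Prod.snd hh
    have := congrArg (fun e : Equiv.Perm ℤ => e 0) h2
    simp [smul_eq_mul] at this
    omega

lemma twinA_mem : twinA ∈ MonoidHom.ker (twinPerm 5) := by
  have h0 : twinPerm 5 (PresentedGroup.of 0) = Equiv.swap ((0 : Fin 5).castSucc) ((0 : Fin 5).succ) :=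
    PresentedGroup.toGroup.of _
  have h1 : twinPerm 5 (PresentedGroup.of 1) = Equiv.swap ((1 : Fin 5).castSucc) ((1 : Fin 5).succ) :=
    PresentedGroup.toGroup.of _
  rw [MonoidHom.mem_ker, twinA, map_pow, map_mul, h0, h1]
  decide

lemma twinB_mem : twinB ∈ MonoidHom.ker (twinPerm 5) := by
  have h0 : twinPerm 5 (PresentedGroup.of 3) = Equiv.swap ((3 : Fin 5).castSucc) ((3 : Fin 5).succ) :=
    PresentedGroup.toGroup.of _
  have h1 : twinPerm 5 (PresentedGroup.of 4) = Equiv.swap ((4 : Fin 5).castSucc) ((4 : Fin 5).succ) :=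
    PresentedGroup.toGroup.of _
  rw [MonoidHom.mem_ker, twinB, map_pow, map_mul, h0, h1]
  decide



lemma eq_of_commute_of {Y : Type*} (y1 y2 : Y) 
    (h : Commute (FreeGroup.of y1) (FreeGroup.of y2)) : y1 = y2 := by
  classical
  by_contra hne
  have := congrArg (FreeGroup.lift (fun y : Y =>
    if y = y1 then Equiv.swap (0 : Fin 3) 1 else if y = y2 then Equiv.swap 1 2 else 1)) h
  have key : Equiv.swap (0 : Fin 3) 1 * Equiv.swap 1 2 = Equiv.swap 1 2 * Equiv.swap 0 1 := by
    simpa [hne, Ne.symm hne] using this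
  revert key
  decide

lemma freeGroup_exists_zpow {Y : Type*} [Subsingleton Y] (y0 : Y) (g : FreeGroup Y) :
    ∃ k : ℤ, g = (FreeGroup.of y0) ^ k := by
  induction g using FreeGroup.induction_on with
  | C1 => exact ⟨0, by simp⟩
  | of x => exact ⟨1, by rw [Subsingleton.elim x y0]; simp⟩
  | inv_of x _ => exact ⟨-1, by rw [Subsingleton.elim x y0]; simp⟩
  | mul x y hx hy =>
    obtain ⟨k, rfl⟩ := hx; obtain ⟨l, rfl⟩ := hy
    exact ⟨k + l, (zpow_add _ _ _).symm⟩

lemma no_Z2_in_free (X : Type*) (u v : FreeGroup X) (huv : Commute u v)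
    (P : ∀ m n : ℤ, u ^ m * v ^ n = 1 → m = 0 ∧ n = 0) : False := by
  set H := Subgroup.closure ({u, v} : Set (FreeGroup X)) with hH
  have hu : u ∈ H := Subgroup.subset_closure (by simp)
  have hv : v ∈ H := Subgroup.subset_closure (by simp)
  -- H is commutative
  have hcomm : ∀ x y : H, Commute x y := by
    rintro ⟨x, hx⟩ ⟨y, hy⟩
    have : Commute x y := by
      induction hx, hy using Subgroup.closure_induction₂ with
      | mem a b ha hb =>
        rcases ha with rfl | ha <;> rcases hb with rfl | hb
        · exact Commute.refl _
        · simp at hb; subst hb; exact huv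
        · simp at ha; subst ha; exact huv.symm
        · simp at ha hb; subst ha; subst hb; exact Commute.refl _
      | one_left x hx => exact Commute.one_left x
      | one_right x hx => exact Commute.one_right x
      | mul_left x y z _ _ _ h1 h2 => exact h1.mul_left h2
      | mul_right y z x _ _ _ h1 h2 => exact h1.mul_right h2
      | inv_left x y _ _ h => exact h.inv_left
      | inv_right x y _ _ h => exact h.inv_right
    exact Subtype.ext (by simpa [Commute, SemiconjBy] using this)
  haveI : IsFreeGroup H := inferInstance
  set Y := IsFreeGroup.Generators H
  set e : H ≃* FreeGroup Y := IsFreeGroup.toFreeGroup H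
  set U : FreeGroup Y := e ⟨u, hu⟩ with hU
  set V : FreeGroup Y := e ⟨v, hv⟩ with hV
  have P' : ∀ m n : ℤ, U ^ m * V ^ n = 1 → m = 0 ∧ n = 0 := by
    intro m n h
    have : ((⟨u, hu⟩ : H) ^ m * (⟨v, hv⟩ : H) ^ n) = 1 := by
      apply e.injective
      rw [map_mul, map_zpow, map_zpow, map_one, ← hU, ← hV]; exact h
    have h2 : u ^ m * v ^ n = 1 := by
      have := congrArg (Subtype.val) this
      simpa using this
    exact P m n h2
  have hYsub : Subsingleton Y := by
    constructor
    intro y1 y2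
    apply eq_of_commute_of
    have : Commute (e.symm (FreeGroup.of y1)) (e.symm (FreeGroup.of y2)) := hcomm _ _
    have := congrArg e (this.eq)
    exact (by simpa [map_mul] using this : FreeGroup.of y1 * FreeGroup.of y2 = FreeGroup.of y2 * FreeGroup.of y1)
  haveI := hYsub
  -- get c with everything a power of c
  obtain ⟨c, hc⟩ : ∃ c : FreeGroup Y, ∀ g : FreeGroup Y, ∃ k : ℤ, g = c ^ k := by
    by_cases hY : Nonempty Y
    · obtain ⟨y0⟩ := hY
      exact ⟨FreeGroup.of y0, freeGroup_exists_zpow y0⟩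
    · refine ⟨1, fun g => ⟨0, ?_⟩⟩
      induction g using FreeGroup.induction_on with
      | C1 => simp
      | of x => exact absurd ⟨x⟩ hY
      | inv_of x h => exact absurd ⟨x⟩ hY
      | mul x y hx hy => rw [hx, hy]; simp
  obtain ⟨k, hk⟩ := hc U
  obtain ⟨l, hl⟩ := hc V
  have : U ^ l * V ^ (-k) = 1 := by
    rw [hk, hl, ← zpow_mul, ← zpow_mul, ← zpow_add, mul_comm k l]
    simp
  obtain ⟨hl0, hk0⟩ := P' l (-k) this
  have hU1 : U = 1 := by rw [hk]; simp [show k = 0 by omega]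
  have := P' 1 0 (by rw [hU1]; simp)
  exact absurd this.1 one_ne_zero

/-- The pure twin group `P̄₆` is not a free group. -/
theorem pureTwin_six_not_free :
    ∀ X : Type, IsEmpty ((MonoidHom.ker (twinPerm 5)) ≃* FreeGroup X) := by
  intro X
  constructor
  intro φ
  set A : MonoidHom.ker (twinPerm 5) := ⟨twinA, twinA_mem⟩ with hA
  set B : MonoidHom.ker (twinPerm 5) := ⟨twinB, twinB_mem⟩ with hB
  refine no_Z2_in_free X (φ A) (φ B) ?_ ?_
  · have hAB : Commute A B := Subtype.ext twinA_comm_twinB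
    exact hAB.map φ.toMonoidHom
  · intro m n h
    apply twin_indep m n
    have h1 : A ^ m * B ^ n = 1 := by
      apply φ.injective
      rw [map_mul, map_zpow, map_zpow, map_one]
      exact h
    have h2 := congrArg (Subtype.val) h1
    simpa using h2

end
end

section
/- The pure twin group \(\overline{P}_3\) is infinite cyclic; it is generated by the element \((\sigma_1 \sigma_2)^3\), which has infinite order. -/
namespace PureTwin3

abbrev a : TwinGroup 2 := PresentedGroup.of 0
abbrev b : TwinGroup 2 := PresentedGroup.of 1
abbrev t : TwinGroup 2 := a * b

lemma sq (i : Fin 2) : (PresentedGroup.of i : TwinGroup 2) * PresentedGroup.of i = 1 := by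
  show PresentedGroup.mk _ (FreeGroup.of i) * PresentedGroup.mk _ (FreeGroup.of i) = 1
  rw [← map_mul]
  exact (QuotientGroup.eq_one_iff _).2
    (Subgroup.subset_normalClosure (Or.inl ⟨i, rfl⟩))

lemma ha : a * a = 1 := sq 0
lemma hb : b * b = 1 := sq 1
lemma a_inv : a⁻¹ = a := inv_eq_of_mul_eq_one_right ha
lemma b_inv : b⁻¹ = b := inv_eq_of_mul_eq_one_right hb

lemma t_inv : t⁻¹ = b * a := by
  show (a * b)⁻¹ = b * a
  rw [mul_inv_rev, a_inv, b_inv]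

lemma conj_t : a * t * a = t⁻¹ := by
  rw [t_inv]
  calc a * (a * b) * a = (a * a) * (b * a) := by group
    _ = b * a := by rw [ha, one_mul]

lemma a_t (k : ℤ) : a * t ^ k = t ^ (-k) * a := by
  have : a * t ^ k * a⁻¹ = (a * t * a⁻¹) ^ k := conj_zpow.symm
  rw [a_inv] at this
  rw [conj_t, inv_zpow'] at this
  calc a * t ^ k = (a * t ^ k * a) * a := by
        rw [mul_assoc, ha, mul_one]
    _ = t ^ (-k) * a := by rw [this]

def S : Subgroup (TwinGroup 2) where
  carrier := {x | ∃ k : ℤ, x = t ^ k ∨ x = t ^ k * a}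
  one_mem' := ⟨0, Or.inl (by simp)⟩
  mul_mem' := by
    rintro x y ⟨j, rfl | rfl⟩ ⟨k, rfl | rfl⟩
    · exact ⟨j + k, Or.inl (zpow_add t j k).symm⟩
    · exact ⟨j + k, Or.inr (by rw [← mul_assoc, ← zpow_add])⟩
    · refine ⟨j - k, Or.inr ?_⟩
      rw [mul_assoc, a_t, ← mul_assoc, ← zpow_add, sub_eq_add_neg]
    · refine ⟨j - k, Or.inl ?_⟩
      calc (t ^ j * a) * (t ^ k * a) = t ^ j * (a * t ^ k) * a := by group
        _ = t ^ j * (t ^ (-k) * a) * a := by rw [a_t]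
        _ = (t ^ j * t ^ (-k)) * (a * a) := by group
        _ = t ^ (j - k) := by rw [ha, mul_one, ← zpow_add, sub_eq_add_neg]
  inv_mem' := by
    rintro x ⟨k, rfl | rfl⟩
    · exact ⟨-k, Or.inl (by rw [zpow_neg])⟩
    · refine ⟨k, Or.inr ?_⟩
      calc (t ^ k * a)⁻¹ = a⁻¹ * (t ^ k)⁻¹ := mul_inv_rev _ _
        _ = a * t ^ (-k) := by rw [a_inv, zpow_neg]
        _ = t ^ k * a := by rw [a_t, neg_neg]

lemma structure_thm (x : TwinGroup 2) : ∃ k : ℤ, x = t ^ k ∨ x = t ^ k * a := by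
  refine PresentedGroup.generated_by _ S (fun j => ?_) x
  fin_cases j
  · exact ⟨0, Or.inr (by simp)⟩
  · refine ⟨-1, Or.inr ?_⟩
    show b = t ^ (-1 : ℤ) * a
    rw [zpow_neg, zpow_one, t_inv, mul_assoc, ha, mul_one]

def e : Fin 2 → Equiv.Perm ℤ := ![Equiv.neg ℤ, (Equiv.neg ℤ).trans (Equiv.addLeft 1)]

lemma e_rels : ∀ r ∈ twinRels 2, FreeGroup.lift e r = 1 := by
  rintro r (⟨i, rfl⟩ | ⟨i, j, hij, rfl⟩)
  · simp only [map_mul, FreeGroup.lift_apply_of]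
    fin_cases i <;>
    · ext x
      simp [e, Equiv.Perm.mul_apply]
  · exact absurd hij (by omega)

def Ψ : TwinGroup 2 →* Equiv.Perm ℤ := PresentedGroup.toGroup e_rels

lemma psi_t : Ψ t = e 0 * e 1 := by
  rw [map_mul]
  rw [show Ψ (PresentedGroup.of 0) = e 0 from PresentedGroup.toGroup.of e_rels,
    show Ψ (PresentedGroup.of 1) = e 1 from PresentedGroup.toGroup.of e_rels]

lemma e_pow (m : ℕ) : ((e 0 * e 1) ^ m) (0 : ℤ) = -(m : ℤ) := by
  induction m with
  | zero => simp
  | succ k ih =>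
    rw [pow_succ', Equiv.Perm.mul_apply, ih]
    simp [e, Equiv.Perm.mul_apply]
    ring

end PureTwin3

/-- The pure twin group `P̄₃` is infinite cyclic, generated by `(σ₁σ₂)³`,
which has infinite order. -/
theorem pureTwin_three_infinite_cyclic :
    (PresentedGroup.of 0 * PresentedGroup.of 1 : TwinGroup 2) ^ 3 ∈
        MonoidHom.ker (twinPerm 2) ∧
    (∀ x ∈ MonoidHom.ker (twinPerm 2), ∃ k : ℤ,
      x = ((PresentedGroup.of 0 * PresentedGroup.of 1 : TwinGroup 2) ^ 3) ^ k) ∧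
    ¬ IsOfFinOrder ((PresentedGroup.of 0 * PresentedGroup.of 1 : TwinGroup 2) ^ 3) := by
  classical
  have hperm : ∀ i : Fin 2, twinPerm 2 (PresentedGroup.of i)
      = Equiv.swap (Fin.castSucc i) (Fin.succ i) := fun i =>
    PresentedGroup.toGroup.of (twinRels_hold 2)
  set c : Equiv.Perm (Fin 3) :=
    Equiv.swap (Fin.castSucc (0 : Fin 2)) (Fin.succ (0 : Fin 2)) *
    Equiv.swap (Fin.castSucc (1 : Fin 2)) (Fin.succ (1 : Fin 2)) with hc
  have htc : twinPerm 2 PureTwin3.t = c := by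
    rw [map_mul, hperm 0, hperm 1]
  refine ⟨?_, ?_, ?_⟩
  · rw [MonoidHom.mem_ker, map_pow, htc]
    decide
  · intro x hx
    rw [MonoidHom.mem_ker] at hx
    obtain ⟨k, rfl | rfl⟩ := PureTwin3.structure_thm x
    · rw [map_zpow, htc] at hx
      have h3 : (3 : ℤ) ∣ k := by
        haveI : Fact (Nat.Prime 3) := ⟨by norm_num⟩
        have hc3 : c ^ 3 = 1 := by decide
        have hc1 : c ≠ 1 := by decide
        have horder : orderOf c = 3 := orderOf_eq_prime hc3 hc1
        have h' := orderOf_dvd_iff_zpow_eq_one.2 hx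
        rw [horder] at h'
        exact_mod_cast h'
      obtain ⟨m, rfl⟩ := h3
      refine ⟨m, ?_⟩
      show PureTwin3.t ^ ((3:ℤ) * m) = (PureTwin3.t ^ (3:ℕ)) ^ m
      rw [zpow_mul]
      norm_cast
    · exfalso
      rw [map_mul, map_zpow, htc, hperm 0] at hx
      have := congrArg Equiv.Perm.sign hx
      rw [map_mul, map_zpow, map_one] at this
      have hsc : Equiv.Perm.sign c = 1 := by decide
      have hss : Equiv.Perm.sign
          (Equiv.swap (Fin.castSucc (0 : Fin 2)) (Fin.succ (0 : Fin 2))) = -1 := by decide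
      rw [hsc, one_zpow, hss, one_mul] at this
      exact absurd this (by decide)
  · rw [isOfFinOrder_iff_pow_eq_one]
    rintro ⟨n, hn, h1⟩
    have := congrArg PureTwin3.Ψ h1
    rw [map_pow, map_pow, PureTwin3.psi_t, map_one, ← pow_mul] at this
    have h0 : ((PureTwin3.e 0 * PureTwin3.e 1) ^ (3 * n)) (0:ℤ) = (1 : Equiv.Perm ℤ) (0:ℤ) := by
      rw [this]
    rw [PureTwin3.e_pow (3 * n)] at h0
    simp at h0
    omega
end

section
/- The pure twin group \(\overline{P}_4\) is isomorphic to the free group \(F_7\) of rank 7. -/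
namespace PureTwinAux

open PresentedGroup

abbrev G := TwinGroup 3
abbrev F7 := FreeGroup (Fin 7)

lemma mk_one {r : FreeGroup (Fin 3)} (h : r ∈ twinRels 3) : mk (twinRels 3) r = 1 :=
  (QuotientGroup.eq_one_iff _).2 (Subgroup.subset_normalClosure h)

lemma sq (i : Fin 3) : (of i : G) * of i = 1 := by
  have := mk_one (Or.inl ⟨i, rfl⟩); rwa [map_mul] at this

lemma sq' (i : Fin 3) (x : G) : (of i : G) * (of i * x) = x := by
  rw [← mul_assoc, sq, one_mul]

lemma invg (i : Fin 3) : (of i : G)⁻¹ = of i :=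
  inv_eq_of_mul_eq_one_right (sq i)

lemma comm02 : (of 0 : G) * of 2 = of 2 * of 0 := by
  have h := mk_one (Or.inr ⟨0, 2, by norm_num, rfl⟩)
  simp only [map_mul, map_inv] at h
  have h2 : ((of 0 : G) * of 2) * ((of 2 : G) * of 0)⁻¹ = 1 := by
    rw [mul_inv_rev, ← mul_assoc]; exact h
  exact mul_inv_eq_one.mp h2

lemma comm20 : (of 2 : G) * of 0 = of 0 * of 2 := comm02.symm

lemma comm20' (x : G) : (of 2 : G) * (of 0 * x) = of 0 * (of 2 * x) := by
  rw [← mul_assoc, comm20, mul_assoc]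

def sw (i : Fin 3) : Equiv.Perm (Fin 4) := Equiv.swap i.castSucc i.succ

def X (j : Fin 7) : F7 := FreeGroup.of j

def trans : Fin 24 → G
  | 0 => (1 : G)
  | 1 => of 0
  | 2 => of 1
  | 3 => of 2
  | 4 => of 1 * of 0
  | 5 => of 2 * of 0
  | 6 => of 0 * of 1
  | 7 => of 2 * of 1
  | 8 => of 1 * of 2
  | 9 => of 0 * of 1 * of 0
  | 10 => of 2 * of 1 * of 0
  | 11 => of 1 * of 2 * of 0
  | 12 => of 2 * of 0 * of 1
  | 13 => of 1 * of 2 * of 1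
  | 14 => of 0 * of 1 * of 2
  | 15 => of 2 * of 0 * of 1 * of 0
  | 16 => of 1 * of 2 * of 1 * of 0
  | 17 => of 0 * of 1 * of 2 * of 0
  | 18 => of 1 * of 2 * of 0 * of 1
  | 19 => of 0 * of 1 * of 2 * of 1
  | 20 => of 1 * of 2 * of 0 * of 1 * of 0
  | 21 => of 0 * of 1 * of 2 * of 1 * of 0
  | 22 => of 0 * of 1 * of 2 * of 0 * of 1
  | _ => of 0 * of 1 * of 2 * of 0 * of 1 * of 0

def idxP : Fin 24 → Equiv.Perm (Fin 4)
  | 0 => 1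
  | 1 => sw 0
  | 2 => sw 1
  | 3 => sw 2
  | 4 => sw 1 * sw 0
  | 5 => sw 2 * sw 0
  | 6 => sw 0 * sw 1
  | 7 => sw 2 * sw 1
  | 8 => sw 1 * sw 2
  | 9 => sw 0 * sw 1 * sw 0
  | 10 => sw 2 * sw 1 * sw 0
  | 11 => sw 1 * sw 2 * sw 0
  | 12 => sw 2 * sw 0 * sw 1
  | 13 => sw 1 * sw 2 * sw 1
  | 14 => sw 0 * sw 1 * sw 2
  | 15 => sw 2 * sw 0 * sw 1 * sw 0
  | 16 => sw 1 * sw 2 * sw 1 * sw 0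
  | 17 => sw 0 * sw 1 * sw 2 * sw 0
  | 18 => sw 1 * sw 2 * sw 0 * sw 1
  | 19 => sw 0 * sw 1 * sw 2 * sw 1
  | 20 => sw 1 * sw 2 * sw 0 * sw 1 * sw 0
  | 21 => sw 0 * sw 1 * sw 2 * sw 1 * sw 0
  | 22 => sw 0 * sw 1 * sw 2 * sw 0 * sw 1
  | _ => sw 0 * sw 1 * sw 2 * sw 0 * sw 1 * sw 0

def mAct : Fin 3 → Fin 24 → Fin 24
  | 0, 0 => 1
  | 0, 1 => 0
  | 0, 2 => 6
  | 0, 3 => 5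
  | 0, 4 => 9
  | 0, 5 => 3
  | 0, 6 => 2
  | 0, 7 => 12
  | 0, 8 => 14
  | 0, 9 => 4
  | 0, 10 => 15
  | 0, 11 => 17
  | 0, 12 => 7
  | 0, 13 => 19
  | 0, 14 => 8
  | 0, 15 => 10
  | 0, 16 => 21
  | 0, 17 => 11
  | 0, 18 => 22
  | 0, 19 => 13
  | 0, 20 => 23
  | 0, 21 => 16
  | 0, 22 => 18
  | 0, 23 => 20
  | 1, 0 => 2
  | 1, 1 => 4
  | 1, 2 => 0
  | 1, 3 => 8
  | 1, 4 => 1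
  | 1, 5 => 11
  | 1, 6 => 9
  | 1, 7 => 13
  | 1, 8 => 3
  | 1, 9 => 6
  | 1, 10 => 16
  | 1, 11 => 5
  | 1, 12 => 18
  | 1, 13 => 7
  | 1, 14 => 17
  | 1, 15 => 20
  | 1, 16 => 10
  | 1, 17 => 14
  | 1, 18 => 12
  | 1, 19 => 22
  | 1, 20 => 15
  | 1, 21 => 23
  | 1, 22 => 19
  | 1, 23 => 21
  | 2, 0 => 3
  | 2, 1 => 5
  | 2, 2 => 7
  | 2, 3 => 0
  | 2, 4 => 10
  | 2, 5 => 1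
  | 2, 6 => 12
  | 2, 7 => 2
  | 2, 8 => 13
  | 2, 9 => 15
  | 2, 10 => 4
  | 2, 11 => 16
  | 2, 12 => 6
  | 2, 13 => 8
  | 2, 14 => 19
  | 2, 15 => 9
  | 2, 16 => 11
  | 2, 17 => 21
  | 2, 18 => 20
  | 2, 19 => 14
  | 2, 20 => 18
  | 2, 21 => 17
  | 2, 22 => 23
  | _, _ => 22

def cTab : Fin 3 → Fin 24 → F7
  | 0, 0 => (1 : FreeGroup (Fin 7))
  | 0, 1 => (1 : FreeGroup (Fin 7))
  | 0, 2 => (1 : FreeGroup (Fin 7))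
  | 0, 3 => (1 : FreeGroup (Fin 7))
  | 0, 4 => (1 : FreeGroup (Fin 7))
  | 0, 5 => (1 : FreeGroup (Fin 7))
  | 0, 6 => (1 : FreeGroup (Fin 7))
  | 0, 7 => (1 : FreeGroup (Fin 7))
  | 0, 8 => (1 : FreeGroup (Fin 7))
  | 0, 9 => (1 : FreeGroup (Fin 7))
  | 0, 10 => (1 : FreeGroup (Fin 7))
  | 0, 11 => (1 : FreeGroup (Fin 7))
  | 0, 12 => (1 : FreeGroup (Fin 7))
  | 0, 13 => (1 : FreeGroup (Fin 7))
  | 0, 14 => (1 : FreeGroup (Fin 7))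
  | 0, 15 => (1 : FreeGroup (Fin 7))
  | 0, 16 => (1 : FreeGroup (Fin 7))
  | 0, 17 => (1 : FreeGroup (Fin 7))
  | 0, 18 => (1 : FreeGroup (Fin 7))
  | 0, 19 => (1 : FreeGroup (Fin 7))
  | 0, 20 => (1 : FreeGroup (Fin 7))
  | 0, 21 => (1 : FreeGroup (Fin 7))
  | 0, 22 => (1 : FreeGroup (Fin 7))
  | 0, 23 => (1 : FreeGroup (Fin 7))
  | 1, 0 => (1 : FreeGroup (Fin 7))
  | 1, 1 => (1 : FreeGroup (Fin 7))
  | 1, 2 => (1 : FreeGroup (Fin 7))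
  | 1, 3 => (1 : FreeGroup (Fin 7))
  | 1, 4 => (1 : FreeGroup (Fin 7))
  | 1, 5 => (1 : FreeGroup (Fin 7))
  | 1, 6 => (X 0)⁻¹
  | 1, 7 => (1 : FreeGroup (Fin 7))
  | 1, 8 => (1 : FreeGroup (Fin 7))
  | 1, 9 => X 0
  | 1, 10 => (1 : FreeGroup (Fin 7))
  | 1, 11 => (1 : FreeGroup (Fin 7))
  | 1, 12 => (1 : FreeGroup (Fin 7))
  | 1, 13 => (1 : FreeGroup (Fin 7))
  | 1, 14 => (X 1)⁻¹
  | 1, 15 => (1 : FreeGroup (Fin 7))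
  | 1, 16 => (1 : FreeGroup (Fin 7))
  | 1, 17 => X 1
  | 1, 18 => (1 : FreeGroup (Fin 7))
  | 1, 19 => (X 2)⁻¹
  | 1, 20 => (1 : FreeGroup (Fin 7))
  | 1, 21 => (X 3)⁻¹
  | 1, 22 => X 2
  | 1, 23 => X 3
  | 2, 0 => (1 : FreeGroup (Fin 7))
  | 2, 1 => (1 : FreeGroup (Fin 7))
  | 2, 2 => (1 : FreeGroup (Fin 7))
  | 2, 3 => (1 : FreeGroup (Fin 7))
  | 2, 4 => (1 : FreeGroup (Fin 7))
  | 2, 5 => (1 : FreeGroup (Fin 7))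
  | 2, 6 => (1 : FreeGroup (Fin 7))
  | 2, 7 => (1 : FreeGroup (Fin 7))
  | 2, 8 => (X 4)⁻¹
  | 2, 9 => (1 : FreeGroup (Fin 7))
  | 2, 10 => (1 : FreeGroup (Fin 7))
  | 2, 11 => (X 5)⁻¹
  | 2, 12 => (1 : FreeGroup (Fin 7))
  | 2, 13 => X 4
  | 2, 14 => (X 4)⁻¹
  | 2, 15 => (1 : FreeGroup (Fin 7))
  | 2, 16 => X 5
  | 2, 17 => (X 5)⁻¹
  | 2, 18 => (X 6)⁻¹
  | 2, 19 => X 4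
  | 2, 20 => X 6
  | 2, 21 => X 5
  | 2, 22 => (X 6)⁻¹
  | _, _ => X 6

def basis : Fin 7 → G
  | 0 => of 0 * of 1 * of 0 * of 1 * of 0 * of 1
  | 1 => of 0 * of 2 * of 1 * of 0 * of 1 * of 0 * of 1 * of 2
  | 2 => of 1 * of 0 * of 2 * of 1 * of 0 * of 1 * of 0 * of 1 * of 2 * of 1
  | 3 => of 0 * of 1 * of 0 * of 2 * of 1 * of 0 * of 1 * of 0 * of 1 * of 2 * of 1 * of 0
  | 4 => of 1 * of 2 * of 1 * of 2 * of 1 * of 2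
  | 5 => of 0 * of 1 * of 2 * of 1 * of 2 * of 1 * of 0 * of 2
  | _ => of 0 * of 1 * of 0 * of 2 * of 1 * of 2 * of 1 * of 0 * of 2 * of 1

lemma mAct_invol : ∀ (i : Fin 3) (m : Fin 24), mAct i (mAct i m) = m := by decide

lemma mAct_comm : ∀ m : Fin 24, mAct 0 (mAct 2 m) = mAct 2 (mAct 0 m) := by decide

lemma hC1 : ∀ (i : Fin 3) (m : Fin 24), cTab i m * cTab i (mAct i m) = 1 := by decide

lemma hC2 : ∀ m : Fin 24, cTab 2 m * cTab 0 (mAct 2 m) = cTab 0 m * cTab 2 (mAct 0 m) := by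
  decide

lemma hlink : ∀ (i : Fin 3) (m : Fin 24), idxP (mAct i m) = sw i * idxP m := by decide

lemma idx_inj : ∀ m m' : Fin 24, idxP m = idxP m' → m = m' := by decide

def rhoGen (i : Fin 3) : Equiv.Perm (Fin 24 × F7) where
  toFun p := (mAct i p.1, p.2 * cTab i p.1)
  invFun p := (mAct i p.1, p.2 * (cTab i (mAct i p.1))⁻¹)
  left_inv p := by
    obtain ⟨m, h⟩ := p
    simp only [mAct_invol, mul_inv_cancel_right]
  right_inv p := by
    obtain ⟨m, h⟩ := p
    simp only [mAct_invol, inv_mul_cancel_right]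

lemma rhoGen_apply (i : Fin 3) (p : Fin 24 × F7) :
    rhoGen i p = (mAct i p.1, p.2 * cTab i p.1) := rfl

lemma hrels : ∀ r ∈ twinRels 3, FreeGroup.lift rhoGen r = 1 := by
  rintro r (⟨i, rfl⟩ | ⟨i, j, hij, rfl⟩)
  · simp only [map_mul, FreeGroup.lift_apply_of]
    refine Equiv.ext fun p => ?_
    obtain ⟨m, h⟩ := p
    rw [Equiv.Perm.mul_apply, rhoGen_apply, rhoGen_apply, Equiv.Perm.one_apply]
    simp only [mAct_invol, mul_assoc, hC1, mul_one]
  · have hj : j = 2 := Fin.ext (by omega)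
    have hi : i = 0 := Fin.ext (by omega)
    subst hj; subst hi
    have hcomm : rhoGen 0 * rhoGen 2 = rhoGen 2 * rhoGen 0 := by
      refine Equiv.ext fun p => ?_
      obtain ⟨m, h⟩ := p
      rw [Equiv.Perm.mul_apply, Equiv.Perm.mul_apply, rhoGen_apply, rhoGen_apply,
        rhoGen_apply, rhoGen_apply]
      simp only [mul_assoc, hC2, mAct_comm]
    simp only [map_mul, map_inv, FreeGroup.lift_apply_of]
    rw [hcomm]
    group

def rho : G →* Equiv.Perm (Fin 24 × F7) := PresentedGroup.toGroup hrels

lemma rho_of (i : Fin 3) : rho (of i) = rhoGen i := PresentedGroup.toGroup.of hrels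

lemma twinPerm_of (i : Fin 3) : twinPerm 3 (of i) = sw i :=
  PresentedGroup.toGroup.of (twinRels_hold 3)

lemma tid_0_0 : (of 0 : G) * (1 : G) = (of 0) * (FreeGroup.lift basis ((1 : FreeGroup (Fin 7))))⁻¹ := by
  simp only [X, map_inv, map_one, FreeGroup.lift_apply_of, basis]
  simp only [mul_assoc, one_mul, mul_one, inv_one, inv_inv, mul_inv_rev, sq, sq',
    invg, comm20, comm20']

lemma tid_0_1 : (of 0 : G) * (of 0) = (1 : G) * (FreeGroup.lift basis ((1 : FreeGroup (Fin 7))))⁻¹ := by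
  simp only [X, map_inv, map_one, FreeGroup.lift_apply_of, basis]
  simp only [mul_assoc, one_mul, mul_one, inv_one, inv_inv, mul_inv_rev, sq, sq',
    invg, comm20, comm20']

lemma tid_0_2 : (of 0 : G) * (of 1) = (of 0 * of 1) * (FreeGroup.lift basis ((1 : FreeGroup (Fin 7))))⁻¹ := by
  simp only [X, map_inv, map_one, FreeGroup.lift_apply_of, basis]
  simp only [mul_assoc, one_mul, mul_one, inv_one, inv_inv, mul_inv_rev, sq, sq',
    invg, comm20, comm20']

lemma tid_0_3 : (of 0 : G) * (of 2) = (of 2 * of 0) * (FreeGroup.lift basis ((1 : FreeGroup (Fin 7))))⁻¹ := by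
  simp only [X, map_inv, map_one, FreeGroup.lift_apply_of, basis]
  simp only [mul_assoc, one_mul, mul_one, inv_one, inv_inv, mul_inv_rev, sq, sq',
    invg, comm20, comm20']

lemma tid_0_4 : (of 0 : G) * (of 1 * of 0) = (of 0 * of 1 * of 0) * (FreeGroup.lift basis ((1 : FreeGroup (Fin 7))))⁻¹ := by
  simp only [X, map_inv, map_one, FreeGroup.lift_apply_of, basis]
  simp only [mul_assoc, one_mul, mul_one, inv_one, inv_inv, mul_inv_rev, sq, sq',
    invg, comm20, comm20']

lemma tid_0_5 : (of 0 : G) * (of 2 * of 0) = (of 2) * (FreeGroup.lift basis ((1 : FreeGroup (Fin 7))))⁻¹ := by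
  simp only [X, map_inv, map_one, FreeGroup.lift_apply_of, basis]
  simp only [mul_assoc, one_mul, mul_one, inv_one, inv_inv, mul_inv_rev, sq, sq',
    invg, comm20, comm20']

lemma tid_0_6 : (of 0 : G) * (of 0 * of 1) = (of 1) * (FreeGroup.lift basis ((1 : FreeGroup (Fin 7))))⁻¹ := by
  simp only [X, map_inv, map_one, FreeGroup.lift_apply_of, basis]
  simp only [mul_assoc, one_mul, mul_one, inv_one, inv_inv, mul_inv_rev, sq, sq',
    invg, comm20, comm20']

lemma tid_0_7 : (of 0 : G) * (of 2 * of 1) = (of 2 * of 0 * of 1) * (FreeGroup.lift basis ((1 : FreeGroup (Fin 7))))⁻¹ := by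
  simp only [X, map_inv, map_one, FreeGroup.lift_apply_of, basis]
  simp only [mul_assoc, one_mul, mul_one, inv_one, inv_inv, mul_inv_rev, sq, sq',
    invg, comm20, comm20']

lemma tid_0_8 : (of 0 : G) * (of 1 * of 2) = (of 0 * of 1 * of 2) * (FreeGroup.lift basis ((1 : FreeGroup (Fin 7))))⁻¹ := by
  simp only [X, map_inv, map_one, FreeGroup.lift_apply_of, basis]
  simp only [mul_assoc, one_mul, mul_one, inv_one, inv_inv, mul_inv_rev, sq, sq',
    invg, comm20, comm20']

lemma tid_0_9 : (of 0 : G) * (of 0 * of 1 * of 0) = (of 1 * of 0) * (FreeGroup.lift basis ((1 : FreeGroup (Fin 7))))⁻¹ := by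
  simp only [X, map_inv, map_one, FreeGroup.lift_apply_of, basis]
  simp only [mul_assoc, one_mul, mul_one, inv_one, inv_inv, mul_inv_rev, sq, sq',
    invg, comm20, comm20']

lemma tid_0_10 : (of 0 : G) * (of 2 * of 1 * of 0) = (of 2 * of 0 * of 1 * of 0) * (FreeGroup.lift basis ((1 : FreeGroup (Fin 7))))⁻¹ := by
  simp only [X, map_inv, map_one, FreeGroup.lift_apply_of, basis]
  simp only [mul_assoc, one_mul, mul_one, inv_one, inv_inv, mul_inv_rev, sq, sq',
    invg, comm20, comm20']

lemma tid_0_11 : (of 0 : G) * (of 1 * of 2 * of 0) = (of 0 * of 1 * of 2 * of 0) * (FreeGroup.lift basis ((1 : FreeGroup (Fin 7))))⁻¹ := by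
  simp only [X, map_inv, map_one, FreeGroup.lift_apply_of, basis]
  simp only [mul_assoc, one_mul, mul_one, inv_one, inv_inv, mul_inv_rev, sq, sq',
    invg, comm20, comm20']

lemma tid_0_12 : (of 0 : G) * (of 2 * of 0 * of 1) = (of 2 * of 1) * (FreeGroup.lift basis ((1 : FreeGroup (Fin 7))))⁻¹ := by
  simp only [X, map_inv, map_one, FreeGroup.lift_apply_of, basis]
  simp only [mul_assoc, one_mul, mul_one, inv_one, inv_inv, mul_inv_rev, sq, sq',
    invg, comm20, comm20']

lemma tid_0_13 : (of 0 : G) * (of 1 * of 2 * of 1) = (of 0 * of 1 * of 2 * of 1) * (FreeGroup.lift basis ((1 : FreeGroup (Fin 7))))⁻¹ := by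
  simp only [X, map_inv, map_one, FreeGroup.lift_apply_of, basis]
  simp only [mul_assoc, one_mul, mul_one, inv_one, inv_inv, mul_inv_rev, sq, sq',
    invg, comm20, comm20']

lemma tid_0_14 : (of 0 : G) * (of 0 * of 1 * of 2) = (of 1 * of 2) * (FreeGroup.lift basis ((1 : FreeGroup (Fin 7))))⁻¹ := by
  simp only [X, map_inv, map_one, FreeGroup.lift_apply_of, basis]
  simp only [mul_assoc, one_mul, mul_one, inv_one, inv_inv, mul_inv_rev, sq, sq',
    invg, comm20, comm20']

lemma tid_0_15 : (of 0 : G) * (of 2 * of 0 * of 1 * of 0) = (of 2 * of 1 * of 0) * (FreeGroup.lift basis ((1 : FreeGroup (Fin 7))))⁻¹ := by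
  simp only [X, map_inv, map_one, FreeGroup.lift_apply_of, basis]
  simp only [mul_assoc, one_mul, mul_one, inv_one, inv_inv, mul_inv_rev, sq, sq',
    invg, comm20, comm20']

lemma tid_0_16 : (of 0 : G) * (of 1 * of 2 * of 1 * of 0) = (of 0 * of 1 * of 2 * of 1 * of 0) * (FreeGroup.lift basis ((1 : FreeGroup (Fin 7))))⁻¹ := by
  simp only [X, map_inv, map_one, FreeGroup.lift_apply_of, basis]
  simp only [mul_assoc, one_mul, mul_one, inv_one, inv_inv, mul_inv_rev, sq, sq',
    invg, comm20, comm20']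

lemma tid_0_17 : (of 0 : G) * (of 0 * of 1 * of 2 * of 0) = (of 1 * of 2 * of 0) * (FreeGroup.lift basis ((1 : FreeGroup (Fin 7))))⁻¹ := by
  simp only [X, map_inv, map_one, FreeGroup.lift_apply_of, basis]
  simp only [mul_assoc, one_mul, mul_one, inv_one, inv_inv, mul_inv_rev, sq, sq',
    invg, comm20, comm20']

lemma tid_0_18 : (of 0 : G) * (of 1 * of 2 * of 0 * of 1) = (of 0 * of 1 * of 2 * of 0 * of 1) * (FreeGroup.lift basis ((1 : FreeGroup (Fin 7))))⁻¹ := by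
  simp only [X, map_inv, map_one, FreeGroup.lift_apply_of, basis]
  simp only [mul_assoc, one_mul, mul_one, inv_one, inv_inv, mul_inv_rev, sq, sq',
    invg, comm20, comm20']

lemma tid_0_19 : (of 0 : G) * (of 0 * of 1 * of 2 * of 1) = (of 1 * of 2 * of 1) * (FreeGroup.lift basis ((1 : FreeGroup (Fin 7))))⁻¹ := by
  simp only [X, map_inv, map_one, FreeGroup.lift_apply_of, basis]
  simp only [mul_assoc, one_mul, mul_one, inv_one, inv_inv, mul_inv_rev, sq, sq',
    invg, comm20, comm20']

lemma tid_0_20 : (of 0 : G) * (of 1 * of 2 * of 0 * of 1 * of 0) = (of 0 * of 1 * of 2 * of 0 * of 1 * of 0) * (FreeGroup.lift basis ((1 : FreeGroup (Fin 7))))⁻¹ := by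
  simp only [X, map_inv, map_one, FreeGroup.lift_apply_of, basis]
  simp only [mul_assoc, one_mul, mul_one, inv_one, inv_inv, mul_inv_rev, sq, sq',
    invg, comm20, comm20']

lemma tid_0_21 : (of 0 : G) * (of 0 * of 1 * of 2 * of 1 * of 0) = (of 1 * of 2 * of 1 * of 0) * (FreeGroup.lift basis ((1 : FreeGroup (Fin 7))))⁻¹ := by
  simp only [X, map_inv, map_one, FreeGroup.lift_apply_of, basis]
  simp only [mul_assoc, one_mul, mul_one, inv_one, inv_inv, mul_inv_rev, sq, sq',
    invg, comm20, comm20']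

lemma tid_0_22 : (of 0 : G) * (of 0 * of 1 * of 2 * of 0 * of 1) = (of 1 * of 2 * of 0 * of 1) * (FreeGroup.lift basis ((1 : FreeGroup (Fin 7))))⁻¹ := by
  simp only [X, map_inv, map_one, FreeGroup.lift_apply_of, basis]
  simp only [mul_assoc, one_mul, mul_one, inv_one, inv_inv, mul_inv_rev, sq, sq',
    invg, comm20, comm20']

lemma tid_0_23 : (of 0 : G) * (of 0 * of 1 * of 2 * of 0 * of 1 * of 0) = (of 1 * of 2 * of 0 * of 1 * of 0) * (FreeGroup.lift basis ((1 : FreeGroup (Fin 7))))⁻¹ := by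
  simp only [X, map_inv, map_one, FreeGroup.lift_apply_of, basis]
  simp only [mul_assoc, one_mul, mul_one, inv_one, inv_inv, mul_inv_rev, sq, sq',
    invg, comm20, comm20']

lemma tid_1_0 : (of 1 : G) * (1 : G) = (of 1) * (FreeGroup.lift basis ((1 : FreeGroup (Fin 7))))⁻¹ := by
  simp only [X, map_inv, map_one, FreeGroup.lift_apply_of, basis]
  simp only [mul_assoc, one_mul, mul_one, inv_one, inv_inv, mul_inv_rev, sq, sq',
    invg, comm20, comm20']

lemma tid_1_1 : (of 1 : G) * (of 0) = (of 1 * of 0) * (FreeGroup.lift basis ((1 : FreeGroup (Fin 7))))⁻¹ := by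
  simp only [X, map_inv, map_one, FreeGroup.lift_apply_of, basis]
  simp only [mul_assoc, one_mul, mul_one, inv_one, inv_inv, mul_inv_rev, sq, sq',
    invg, comm20, comm20']

lemma tid_1_2 : (of 1 : G) * (of 1) = (1 : G) * (FreeGroup.lift basis ((1 : FreeGroup (Fin 7))))⁻¹ := by
  simp only [X, map_inv, map_one, FreeGroup.lift_apply_of, basis]
  simp only [mul_assoc, one_mul, mul_one, inv_one, inv_inv, mul_inv_rev, sq, sq',
    invg, comm20, comm20']

lemma tid_1_3 : (of 1 : G) * (of 2) = (of 1 * of 2) * (FreeGroup.lift basis ((1 : FreeGroup (Fin 7))))⁻¹ := by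
  simp only [X, map_inv, map_one, FreeGroup.lift_apply_of, basis]
  simp only [mul_assoc, one_mul, mul_one, inv_one, inv_inv, mul_inv_rev, sq, sq',
    invg, comm20, comm20']

lemma tid_1_4 : (of 1 : G) * (of 1 * of 0) = (of 0) * (FreeGroup.lift basis ((1 : FreeGroup (Fin 7))))⁻¹ := by
  simp only [X, map_inv, map_one, FreeGroup.lift_apply_of, basis]
  simp only [mul_assoc, one_mul, mul_one, inv_one, inv_inv, mul_inv_rev, sq, sq',
    invg, comm20, comm20']

lemma tid_1_5 : (of 1 : G) * (of 2 * of 0) = (of 1 * of 2 * of 0) * (FreeGroup.lift basis ((1 : FreeGroup (Fin 7))))⁻¹ := by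
  simp only [X, map_inv, map_one, FreeGroup.lift_apply_of, basis]
  simp only [mul_assoc, one_mul, mul_one, inv_one, inv_inv, mul_inv_rev, sq, sq',
    invg, comm20, comm20']

lemma tid_1_6 : (of 1 : G) * (of 0 * of 1) = (of 0 * of 1 * of 0) * (FreeGroup.lift basis ((X 0)⁻¹))⁻¹ := by
  simp only [X, map_inv, map_one, FreeGroup.lift_apply_of, basis]
  simp only [mul_assoc, one_mul, mul_one, inv_one, inv_inv, mul_inv_rev, sq, sq',
    invg, comm20, comm20']

lemma tid_1_7 : (of 1 : G) * (of 2 * of 1) = (of 1 * of 2 * of 1) * (FreeGroup.lift basis ((1 : FreeGroup (Fin 7))))⁻¹ := by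
  simp only [X, map_inv, map_one, FreeGroup.lift_apply_of, basis]
  simp only [mul_assoc, one_mul, mul_one, inv_one, inv_inv, mul_inv_rev, sq, sq',
    invg, comm20, comm20']

lemma tid_1_8 : (of 1 : G) * (of 1 * of 2) = (of 2) * (FreeGroup.lift basis ((1 : FreeGroup (Fin 7))))⁻¹ := by
  simp only [X, map_inv, map_one, FreeGroup.lift_apply_of, basis]
  simp only [mul_assoc, one_mul, mul_one, inv_one, inv_inv, mul_inv_rev, sq, sq',
    invg, comm20, comm20']

lemma tid_1_9 : (of 1 : G) * (of 0 * of 1 * of 0) = (of 0 * of 1) * (FreeGroup.lift basis (X 0))⁻¹ := by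
  simp only [X, map_inv, map_one, FreeGroup.lift_apply_of, basis]
  simp only [mul_assoc, one_mul, mul_one, inv_one, inv_inv, mul_inv_rev, sq, sq',
    invg, comm20, comm20']

lemma tid_1_10 : (of 1 : G) * (of 2 * of 1 * of 0) = (of 1 * of 2 * of 1 * of 0) * (FreeGroup.lift basis ((1 : FreeGroup (Fin 7))))⁻¹ := by
  simp only [X, map_inv, map_one, FreeGroup.lift_apply_of, basis]
  simp only [mul_assoc, one_mul, mul_one, inv_one, inv_inv, mul_inv_rev, sq, sq',
    invg, comm20, comm20']

lemma tid_1_11 : (of 1 : G) * (of 1 * of 2 * of 0) = (of 2 * of 0) * (FreeGroup.lift basis ((1 : FreeGroup (Fin 7))))⁻¹ := by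
  simp only [X, map_inv, map_one, FreeGroup.lift_apply_of, basis]
  simp only [mul_assoc, one_mul, mul_one, inv_one, inv_inv, mul_inv_rev, sq, sq',
    invg, comm20, comm20']

lemma tid_1_12 : (of 1 : G) * (of 2 * of 0 * of 1) = (of 1 * of 2 * of 0 * of 1) * (FreeGroup.lift basis ((1 : FreeGroup (Fin 7))))⁻¹ := by
  simp only [X, map_inv, map_one, FreeGroup.lift_apply_of, basis]
  simp only [mul_assoc, one_mul, mul_one, inv_one, inv_inv, mul_inv_rev, sq, sq',
    invg, comm20, comm20']

lemma tid_1_13 : (of 1 : G) * (of 1 * of 2 * of 1) = (of 2 * of 1) * (FreeGroup.lift basis ((1 : FreeGroup (Fin 7))))⁻¹ := by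
  simp only [X, map_inv, map_one, FreeGroup.lift_apply_of, basis]
  simp only [mul_assoc, one_mul, mul_one, inv_one, inv_inv, mul_inv_rev, sq, sq',
    invg, comm20, comm20']

lemma tid_1_14 : (of 1 : G) * (of 0 * of 1 * of 2) = (of 0 * of 1 * of 2 * of 0) * (FreeGroup.lift basis ((X 1)⁻¹))⁻¹ := by
  simp only [X, map_inv, map_one, FreeGroup.lift_apply_of, basis]
  simp only [mul_assoc, one_mul, mul_one, inv_one, inv_inv, mul_inv_rev, sq, sq',
    invg, comm20, comm20']

lemma tid_1_15 : (of 1 : G) * (of 2 * of 0 * of 1 * of 0) = (of 1 * of 2 * of 0 * of 1 * of 0) * (FreeGroup.lift basis ((1 : FreeGroup (Fin 7))))⁻¹ := by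
  simp only [X, map_inv, map_one, FreeGroup.lift_apply_of, basis]
  simp only [mul_assoc, one_mul, mul_one, inv_one, inv_inv, mul_inv_rev, sq, sq',
    invg, comm20, comm20']

lemma tid_1_16 : (of 1 : G) * (of 1 * of 2 * of 1 * of 0) = (of 2 * of 1 * of 0) * (FreeGroup.lift basis ((1 : FreeGroup (Fin 7))))⁻¹ := by
  simp only [X, map_inv, map_one, FreeGroup.lift_apply_of, basis]
  simp only [mul_assoc, one_mul, mul_one, inv_one, inv_inv, mul_inv_rev, sq, sq',
    invg, comm20, comm20']

lemma tid_1_17 : (of 1 : G) * (of 0 * of 1 * of 2 * of 0) = (of 0 * of 1 * of 2) * (FreeGroup.lift basis (X 1))⁻¹ := by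
  simp only [X, map_inv, map_one, FreeGroup.lift_apply_of, basis]
  simp only [mul_assoc, one_mul, mul_one, inv_one, inv_inv, mul_inv_rev, sq, sq',
    invg, comm20, comm20']

lemma tid_1_18 : (of 1 : G) * (of 1 * of 2 * of 0 * of 1) = (of 2 * of 0 * of 1) * (FreeGroup.lift basis ((1 : FreeGroup (Fin 7))))⁻¹ := by
  simp only [X, map_inv, map_one, FreeGroup.lift_apply_of, basis]
  simp only [mul_assoc, one_mul, mul_one, inv_one, inv_inv, mul_inv_rev, sq, sq',
    invg, comm20, comm20']

lemma tid_1_19 : (of 1 : G) * (of 0 * of 1 * of 2 * of 1) = (of 0 * of 1 * of 2 * of 0 * of 1) * (FreeGroup.lift basis ((X 2)⁻¹))⁻¹ := by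
  simp only [X, map_inv, map_one, FreeGroup.lift_apply_of, basis]
  simp only [mul_assoc, one_mul, mul_one, inv_one, inv_inv, mul_inv_rev, sq, sq',
    invg, comm20, comm20']

lemma tid_1_20 : (of 1 : G) * (of 1 * of 2 * of 0 * of 1 * of 0) = (of 2 * of 0 * of 1 * of 0) * (FreeGroup.lift basis ((1 : FreeGroup (Fin 7))))⁻¹ := by
  simp only [X, map_inv, map_one, FreeGroup.lift_apply_of, basis]
  simp only [mul_assoc, one_mul, mul_one, inv_one, inv_inv, mul_inv_rev, sq, sq',
    invg, comm20, comm20']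

lemma tid_1_21 : (of 1 : G) * (of 0 * of 1 * of 2 * of 1 * of 0) = (of 0 * of 1 * of 2 * of 0 * of 1 * of 0) * (FreeGroup.lift basis ((X 3)⁻¹))⁻¹ := by
  simp only [X, map_inv, map_one, FreeGroup.lift_apply_of, basis]
  simp only [mul_assoc, one_mul, mul_one, inv_one, inv_inv, mul_inv_rev, sq, sq',
    invg, comm20, comm20']

lemma tid_1_22 : (of 1 : G) * (of 0 * of 1 * of 2 * of 0 * of 1) = (of 0 * of 1 * of 2 * of 1) * (FreeGroup.lift basis (X 2))⁻¹ := by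
  simp only [X, map_inv, map_one, FreeGroup.lift_apply_of, basis]
  simp only [mul_assoc, one_mul, mul_one, inv_one, inv_inv, mul_inv_rev, sq, sq',
    invg, comm20, comm20']

lemma tid_1_23 : (of 1 : G) * (of 0 * of 1 * of 2 * of 0 * of 1 * of 0) = (of 0 * of 1 * of 2 * of 1 * of 0) * (FreeGroup.lift basis (X 3))⁻¹ := by
  simp only [X, map_inv, map_one, FreeGroup.lift_apply_of, basis]
  simp only [mul_assoc, one_mul, mul_one, inv_one, inv_inv, mul_inv_rev, sq, sq',
    invg, comm20, comm20']

lemma tid_2_0 : (of 2 : G) * (1 : G) = (of 2) * (FreeGroup.lift basis ((1 : FreeGroup (Fin 7))))⁻¹ := by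
  simp only [X, map_inv, map_one, FreeGroup.lift_apply_of, basis]
  simp only [mul_assoc, one_mul, mul_one, inv_one, inv_inv, mul_inv_rev, sq, sq',
    invg, comm20, comm20']

lemma tid_2_1 : (of 2 : G) * (of 0) = (of 2 * of 0) * (FreeGroup.lift basis ((1 : FreeGroup (Fin 7))))⁻¹ := by
  simp only [X, map_inv, map_one, FreeGroup.lift_apply_of, basis]
  simp only [mul_assoc, one_mul, mul_one, inv_one, inv_inv, mul_inv_rev, sq, sq',
    invg, comm20, comm20']

lemma tid_2_2 : (of 2 : G) * (of 1) = (of 2 * of 1) * (FreeGroup.lift basis ((1 : FreeGroup (Fin 7))))⁻¹ := by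
  simp only [X, map_inv, map_one, FreeGroup.lift_apply_of, basis]
  simp only [mul_assoc, one_mul, mul_one, inv_one, inv_inv, mul_inv_rev, sq, sq',
    invg, comm20, comm20']

lemma tid_2_3 : (of 2 : G) * (of 2) = (1 : G) * (FreeGroup.lift basis ((1 : FreeGroup (Fin 7))))⁻¹ := by
  simp only [X, map_inv, map_one, FreeGroup.lift_apply_of, basis]
  simp only [mul_assoc, one_mul, mul_one, inv_one, inv_inv, mul_inv_rev, sq, sq',
    invg, comm20, comm20']

lemma tid_2_4 : (of 2 : G) * (of 1 * of 0) = (of 2 * of 1 * of 0) * (FreeGroup.lift basis ((1 : FreeGroup (Fin 7))))⁻¹ := by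
  simp only [X, map_inv, map_one, FreeGroup.lift_apply_of, basis]
  simp only [mul_assoc, one_mul, mul_one, inv_one, inv_inv, mul_inv_rev, sq, sq',
    invg, comm20, comm20']

lemma tid_2_5 : (of 2 : G) * (of 2 * of 0) = (of 0) * (FreeGroup.lift basis ((1 : FreeGroup (Fin 7))))⁻¹ := by
  simp only [X, map_inv, map_one, FreeGroup.lift_apply_of, basis]
  simp only [mul_assoc, one_mul, mul_one, inv_one, inv_inv, mul_inv_rev, sq, sq',
    invg, comm20, comm20']

lemma tid_2_6 : (of 2 : G) * (of 0 * of 1) = (of 2 * of 0 * of 1) * (FreeGroup.lift basis ((1 : FreeGroup (Fin 7))))⁻¹ := by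
  simp only [X, map_inv, map_one, FreeGroup.lift_apply_of, basis]
  simp only [mul_assoc, one_mul, mul_one, inv_one, inv_inv, mul_inv_rev, sq, sq',
    invg, comm20, comm20']

lemma tid_2_7 : (of 2 : G) * (of 2 * of 1) = (of 1) * (FreeGroup.lift basis ((1 : FreeGroup (Fin 7))))⁻¹ := by
  simp only [X, map_inv, map_one, FreeGroup.lift_apply_of, basis]
  simp only [mul_assoc, one_mul, mul_one, inv_one, inv_inv, mul_inv_rev, sq, sq',
    invg, comm20, comm20']

lemma tid_2_8 : (of 2 : G) * (of 1 * of 2) = (of 1 * of 2 * of 1) * (FreeGroup.lift basis ((X 4)⁻¹))⁻¹ := by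
  simp only [X, map_inv, map_one, FreeGroup.lift_apply_of, basis]
  simp only [mul_assoc, one_mul, mul_one, inv_one, inv_inv, mul_inv_rev, sq, sq',
    invg, comm20, comm20']

lemma tid_2_9 : (of 2 : G) * (of 0 * of 1 * of 0) = (of 2 * of 0 * of 1 * of 0) * (FreeGroup.lift basis ((1 : FreeGroup (Fin 7))))⁻¹ := by
  simp only [X, map_inv, map_one, FreeGroup.lift_apply_of, basis]
  simp only [mul_assoc, one_mul, mul_one, inv_one, inv_inv, mul_inv_rev, sq, sq',
    invg, comm20, comm20']

lemma tid_2_10 : (of 2 : G) * (of 2 * of 1 * of 0) = (of 1 * of 0) * (FreeGroup.lift basis ((1 : FreeGroup (Fin 7))))⁻¹ := by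
  simp only [X, map_inv, map_one, FreeGroup.lift_apply_of, basis]
  simp only [mul_assoc, one_mul, mul_one, inv_one, inv_inv, mul_inv_rev, sq, sq',
    invg, comm20, comm20']

lemma tid_2_11 : (of 2 : G) * (of 1 * of 2 * of 0) = (of 1 * of 2 * of 1 * of 0) * (FreeGroup.lift basis ((X 5)⁻¹))⁻¹ := by
  simp only [X, map_inv, map_one, FreeGroup.lift_apply_of, basis]
  simp only [mul_assoc, one_mul, mul_one, inv_one, inv_inv, mul_inv_rev, sq, sq',
    invg, comm20, comm20']

lemma tid_2_12 : (of 2 : G) * (of 2 * of 0 * of 1) = (of 0 * of 1) * (FreeGroup.lift basis ((1 : FreeGroup (Fin 7))))⁻¹ := by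
  simp only [X, map_inv, map_one, FreeGroup.lift_apply_of, basis]
  simp only [mul_assoc, one_mul, mul_one, inv_one, inv_inv, mul_inv_rev, sq, sq',
    invg, comm20, comm20']

lemma tid_2_13 : (of 2 : G) * (of 1 * of 2 * of 1) = (of 1 * of 2) * (FreeGroup.lift basis (X 4))⁻¹ := by
  simp only [X, map_inv, map_one, FreeGroup.lift_apply_of, basis]
  simp only [mul_assoc, one_mul, mul_one, inv_one, inv_inv, mul_inv_rev, sq, sq',
    invg, comm20, comm20']

lemma tid_2_14 : (of 2 : G) * (of 0 * of 1 * of 2) = (of 0 * of 1 * of 2 * of 1) * (FreeGroup.lift basis ((X 4)⁻¹))⁻¹ := by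
  simp only [X, map_inv, map_one, FreeGroup.lift_apply_of, basis]
  simp only [mul_assoc, one_mul, mul_one, inv_one, inv_inv, mul_inv_rev, sq, sq',
    invg, comm20, comm20']

lemma tid_2_15 : (of 2 : G) * (of 2 * of 0 * of 1 * of 0) = (of 0 * of 1 * of 0) * (FreeGroup.lift basis ((1 : FreeGroup (Fin 7))))⁻¹ := by
  simp only [X, map_inv, map_one, FreeGroup.lift_apply_of, basis]
  simp only [mul_assoc, one_mul, mul_one, inv_one, inv_inv, mul_inv_rev, sq, sq',
    invg, comm20, comm20']

lemma tid_2_16 : (of 2 : G) * (of 1 * of 2 * of 1 * of 0) = (of 1 * of 2 * of 0) * (FreeGroup.lift basis (X 5))⁻¹ := by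
  simp only [X, map_inv, map_one, FreeGroup.lift_apply_of, basis]
  simp only [mul_assoc, one_mul, mul_one, inv_one, inv_inv, mul_inv_rev, sq, sq',
    invg, comm20, comm20']

lemma tid_2_17 : (of 2 : G) * (of 0 * of 1 * of 2 * of 0) = (of 0 * of 1 * of 2 * of 1 * of 0) * (FreeGroup.lift basis ((X 5)⁻¹))⁻¹ := by
  simp only [X, map_inv, map_one, FreeGroup.lift_apply_of, basis]
  simp only [mul_assoc, one_mul, mul_one, inv_one, inv_inv, mul_inv_rev, sq, sq',
    invg, comm20, comm20']

lemma tid_2_18 : (of 2 : G) * (of 1 * of 2 * of 0 * of 1) = (of 1 * of 2 * of 0 * of 1 * of 0) * (FreeGroup.lift basis ((X 6)⁻¹))⁻¹ := by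
  simp only [X, map_inv, map_one, FreeGroup.lift_apply_of, basis]
  simp only [mul_assoc, one_mul, mul_one, inv_one, inv_inv, mul_inv_rev, sq, sq',
    invg, comm20, comm20']

lemma tid_2_19 : (of 2 : G) * (of 0 * of 1 * of 2 * of 1) = (of 0 * of 1 * of 2) * (FreeGroup.lift basis (X 4))⁻¹ := by
  simp only [X, map_inv, map_one, FreeGroup.lift_apply_of, basis]
  simp only [mul_assoc, one_mul, mul_one, inv_one, inv_inv, mul_inv_rev, sq, sq',
    invg, comm20, comm20']

lemma tid_2_20 : (of 2 : G) * (of 1 * of 2 * of 0 * of 1 * of 0) = (of 1 * of 2 * of 0 * of 1) * (FreeGroup.lift basis (X 6))⁻¹ := by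
  simp only [X, map_inv, map_one, FreeGroup.lift_apply_of, basis]
  simp only [mul_assoc, one_mul, mul_one, inv_one, inv_inv, mul_inv_rev, sq, sq',
    invg, comm20, comm20']

lemma tid_2_21 : (of 2 : G) * (of 0 * of 1 * of 2 * of 1 * of 0) = (of 0 * of 1 * of 2 * of 0) * (FreeGroup.lift basis (X 5))⁻¹ := by
  simp only [X, map_inv, map_one, FreeGroup.lift_apply_of, basis]
  simp only [mul_assoc, one_mul, mul_one, inv_one, inv_inv, mul_inv_rev, sq, sq',
    invg, comm20, comm20']

lemma tid_2_22 : (of 2 : G) * (of 0 * of 1 * of 2 * of 0 * of 1) = (of 0 * of 1 * of 2 * of 0 * of 1 * of 0) * (FreeGroup.lift basis ((X 6)⁻¹))⁻¹ := by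
  simp only [X, map_inv, map_one, FreeGroup.lift_apply_of, basis]
  simp only [mul_assoc, one_mul, mul_one, inv_one, inv_inv, mul_inv_rev, sq, sq',
    invg, comm20, comm20']

lemma tid_2_23 : (of 2 : G) * (of 0 * of 1 * of 2 * of 0 * of 1 * of 0) = (of 0 * of 1 * of 2 * of 0 * of 1) * (FreeGroup.lift basis (X 6))⁻¹ := by
  simp only [X, map_inv, map_one, FreeGroup.lift_apply_of, basis]
  simp only [mul_assoc, one_mul, mul_one, inv_one, inv_inv, mul_inv_rev, sq, sq',
    invg, comm20, comm20']

lemma hT : ∀ (i : Fin 3) (m : Fin 24), (of i : G) * trans m = trans (mAct i m) * (FreeGroup.lift basis (cTab i m))⁻¹ := by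
  intro i m
  fin_cases i <;> fin_cases m
  exacts [tid_0_0, tid_0_1, tid_0_2, tid_0_3, tid_0_4, tid_0_5, tid_0_6, tid_0_7, tid_0_8, tid_0_9, tid_0_10, tid_0_11, tid_0_12, tid_0_13, tid_0_14, tid_0_15, tid_0_16, tid_0_17, tid_0_18, tid_0_19, tid_0_20, tid_0_21, tid_0_22, tid_0_23, tid_1_0, tid_1_1, tid_1_2, tid_1_3, tid_1_4, tid_1_5, tid_1_6, tid_1_7, tid_1_8, tid_1_9, tid_1_10, tid_1_11, tid_1_12, tid_1_13, tid_1_14, tid_1_15, tid_1_16, tid_1_17, tid_1_18, tid_1_19, tid_1_20, tid_1_21, tid_1_22, tid_1_23, tid_2_0, tid_2_1, tid_2_2, tid_2_3, tid_2_4, tid_2_5, tid_2_6, tid_2_7, tid_2_8, tid_2_9, tid_2_10, tid_2_11, tid_2_12, tid_2_13, tid_2_14, tid_2_15, tid_2_16, tid_2_17, tid_2_18, tid_2_19, tid_2_20, tid_2_21, tid_2_22, tid_2_23]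

def Phi (g : G) : Prop :=
  (∀ p : Fin 24 × F7, rho g p = ((rho g (p.1, 1)).1, p.2 * (rho g (p.1, 1)).2)) ∧
  (∀ m : Fin 24, idxP ((rho g (m, 1)).1) = twinPerm 3 g * idxP m) ∧
  (∀ m : Fin 24, g * trans m = trans ((rho g (m, 1)).1) *
    (FreeGroup.lift basis ((rho g (m, 1)).2))⁻¹)

lemma Phi_one : Phi (1 : G) := by
  refine ⟨fun p => ?_, fun m => ?_, fun m => ?_⟩ <;> simp

lemma Phi_of (i : Fin 3) : Phi (of i : G) := by
  refine ⟨fun p => ?_, fun m => ?_, fun m => ?_⟩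
  · rw [rho_of, rhoGen_apply, rhoGen_apply]
    simp
  · rw [rho_of, rhoGen_apply, twinPerm_of]
    simpa using hlink i m
  · rw [rho_of, rhoGen_apply]
    simpa using hT i m

lemma rho_mul_apply (g k : G) (p : Fin 24 × F7) : rho (g * k) p = rho g (rho k p) := by
  rw [map_mul]; rfl

lemma Phi_mul (g k : G) (hg : Phi g) (hk : Phi k) : Phi (g * k) := by
  obtain ⟨hg1, hg2, hg3⟩ := hg
  obtain ⟨hk1, hk2, hk3⟩ := hk
  have key : ∀ m : Fin 24, rho (g * k) (m, 1) =
      ((rho g ((rho k (m, 1)).1, 1)).1,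
        (rho k (m, 1)).2 * (rho g ((rho k (m, 1)).1, 1)).2) := by
    intro m
    rw [rho_mul_apply]
    have h := hg1 (rho k (m, 1))
    simpa using h
  refine ⟨fun p => ?_, fun m => ?_, fun m => ?_⟩
  · rw [rho_mul_apply, hk1 p, hg1 ((rho k (p.1, 1)).1, p.2 * (rho k (p.1, 1)).2), key p.1]
    simp [mul_assoc]
  · rw [key m]
    simp only []
    rw [hg2 ((rho k (m, 1)).1), hk2 m, map_mul, mul_assoc]
  · rw [key m]
    have step1 : g * k * trans m = g * (trans ((rho k (m, 1)).1) *
        (FreeGroup.lift basis ((rho k (m, 1)).2))⁻¹) := by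
      rw [mul_assoc, hk3 m]
    rw [step1, ← mul_assoc, hg3 ((rho k (m, 1)).1)]
    simp [map_mul, mul_inv_rev, mul_assoc]


lemma rho_inv_cancel (g : G) (p : Fin 24 × F7) : rho g (rho g⁻¹ p) = p := by
  rw [← Equiv.Perm.mul_apply, ← map_mul, mul_inv_cancel, map_one, Equiv.Perm.one_apply]

lemma Phi_inv (g : G) (hg : Phi g) : Phi g⁻¹ := by
  obtain ⟨hg1, hg2, hg3⟩ := hg
  have hfix : ∀ m : Fin 24, (rho g ((rho g⁻¹ (m, 1)).1, 1)).1 = m := by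
    intro m
    have h := rho_inv_cancel g (m, 1)
    have h2 := hg1 (rho g⁻¹ (m, 1))
    rw [h] at h2
    exact ((Prod.ext_iff.mp h2).1).symm
  have hsnd : ∀ m : Fin 24, (rho g ((rho g⁻¹ (m, 1)).1, 1)).2 = ((rho g⁻¹ (m, 1)).2)⁻¹ := by
    intro m
    have h := rho_inv_cancel g (m, 1)
    have h2 := hg1 (rho g⁻¹ (m, 1))
    rw [h] at h2
    have h3 := (Prod.ext_iff.mp h2).2
    have h4 : (rho g⁻¹ (m, 1)).2 * (rho g ((rho g⁻¹ (m, 1)).1, 1)).2 = 1 := h3.symm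
    exact eq_inv_of_mul_eq_one_right h4
  have shape : ∀ p : Fin 24 × F7,
      rho g⁻¹ p = ((rho g⁻¹ (p.1, 1)).1, p.2 * (rho g⁻¹ (p.1, 1)).2) := by
    intro p
    apply (rho g).injective
    rw [rho_inv_cancel, hg1 ((rho g⁻¹ (p.1, 1)).1, p.2 * (rho g⁻¹ (p.1, 1)).2)]
    show p = ((rho g ((rho g⁻¹ (p.1, 1)).1, 1)).1,
      (p.2 * (rho g⁻¹ (p.1, 1)).2) * (rho g ((rho g⁻¹ (p.1, 1)).1, 1)).2)
    rw [hfix, hsnd, mul_assoc, mul_inv_cancel, mul_one]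
  refine ⟨shape, fun m => ?_, fun m => ?_⟩
  · have h2 := hg2 ((rho g⁻¹ (m, 1)).1)
    rw [hfix m] at h2
    rw [show twinPerm 3 g⁻¹ = (twinPerm 3 g)⁻¹ from map_inv _ _, h2, inv_mul_cancel_left]
  · have h3 := hg3 ((rho g⁻¹ (m, 1)).1)
    rw [hfix m, hsnd m] at h3
    rw [show (FreeGroup.lift basis) (((rho g⁻¹) (m, 1)).2⁻¹)
        = ((FreeGroup.lift basis) ((rho g⁻¹ (m, 1)).2))⁻¹ from map_inv _ _, inv_inv] at h3
    have h4 : trans m = g * (trans ((rho g⁻¹ (m, 1)).1) *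
        (FreeGroup.lift basis ((rho g⁻¹ (m, 1)).2))⁻¹) := by
      rw [← mul_assoc, h3, mul_assoc, mul_inv_cancel, mul_one]
    rw [h4, inv_mul_cancel_left]

lemma Phi_all : ∀ g : G, Phi g := by
  intro g
  obtain ⟨w, rfl⟩ := PresentedGroup.mk_surjective (twinRels 3) g
  induction w using FreeGroup.induction_on with
  | C1 => rw [map_one]; exact Phi_one
  | of x => exact Phi_of x
  | inv_of x _ => rw [map_inv]; exact Phi_inv _ (Phi_of x)
  | mul x y ihx ihy => rw [map_mul]; exact Phi_mul _ _ ihx ihy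

lemma bker0 : twinPerm 3 ((of 0 * of 1 * of 0 * of 1 * of 0 * of 1 : G)) = 1 := by
  simp only [map_mul, twinPerm_of]
  decide

lemma bker1 : twinPerm 3 ((of 0 * of 2 * of 1 * of 0 * of 1 * of 0 * of 1 * of 2 : G)) = 1 := by
  simp only [map_mul, twinPerm_of]
  decide

lemma bker2 : twinPerm 3 ((of 1 * of 0 * of 2 * of 1 * of 0 * of 1 * of 0 * of 1 * of 2 * of 1 : G)) = 1 := by
  simp only [map_mul, twinPerm_of]
  decide

lemma bker3 : twinPerm 3 ((of 0 * of 1 * of 0 * of 2 * of 1 * of 0 * of 1 * of 0 * of 1 * of 2 * of 1 * of 0 : G)) = 1 := by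
  simp only [map_mul, twinPerm_of]
  decide

lemma bker4 : twinPerm 3 ((of 1 * of 2 * of 1 * of 2 * of 1 * of 2 : G)) = 1 := by
  simp only [map_mul, twinPerm_of]
  decide

lemma bker5 : twinPerm 3 ((of 0 * of 1 * of 2 * of 1 * of 2 * of 1 * of 0 * of 2 : G)) = 1 := by
  simp only [map_mul, twinPerm_of]
  decide

lemma bker6 : twinPerm 3 ((of 0 * of 1 * of 0 * of 2 * of 1 * of 2 * of 1 * of 0 * of 2 * of 1 : G)) = 1 := by
  simp only [map_mul, twinPerm_of]
  decide

lemma hpf0 : rho ((of 0 * of 1 * of 0 * of 1 * of 0 * of 1 : G)) (0, 1) = ((0 : Fin 24), (FreeGroup.of (0 : Fin 7))⁻¹) := by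
  simp only [map_mul, rho_of, Equiv.Perm.mul_apply, rhoGen_apply]
  decide

lemma hpf1 : rho ((of 0 * of 2 * of 1 * of 0 * of 1 * of 0 * of 1 * of 2 : G)) (0, 1) = ((0 : Fin 24), (FreeGroup.of (1 : Fin 7))⁻¹) := by
  simp only [map_mul, rho_of, Equiv.Perm.mul_apply, rhoGen_apply]
  decide

lemma hpf2 : rho ((of 1 * of 0 * of 2 * of 1 * of 0 * of 1 * of 0 * of 1 * of 2 * of 1 : G)) (0, 1) = ((0 : Fin 24), (FreeGroup.of (2 : Fin 7))⁻¹) := by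
  simp only [map_mul, rho_of, Equiv.Perm.mul_apply, rhoGen_apply]
  decide

set_option maxHeartbeats 1600000 in
lemma hpf3 : rho ((of 0 * of 1 * of 0 * of 2 * of 1 * of 0 * of 1 * of 0 * of 1 * of 2 * of 1 * of 0 : G)) (0, 1) = ((0 : Fin 24), (FreeGroup.of (3 : Fin 7))⁻¹) := by
  simp only [map_mul, rho_of, Equiv.Perm.mul_apply, rhoGen_apply]
  decide

lemma hpf4 : rho ((of 1 * of 2 * of 1 * of 2 * of 1 * of 2 : G)) (0, 1) = ((0 : Fin 24), (FreeGroup.of (4 : Fin 7))⁻¹) := by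
  simp only [map_mul, rho_of, Equiv.Perm.mul_apply, rhoGen_apply]
  decide

lemma hpf5 : rho ((of 0 * of 1 * of 2 * of 1 * of 2 * of 1 * of 0 * of 2 : G)) (0, 1) = ((0 : Fin 24), (FreeGroup.of (5 : Fin 7))⁻¹) := by
  simp only [map_mul, rho_of, Equiv.Perm.mul_apply, rhoGen_apply]
  decide

lemma hpf6 : rho ((of 0 * of 1 * of 0 * of 2 * of 1 * of 2 * of 1 * of 0 * of 2 * of 1 : G)) (0, 1) = ((0 : Fin 24), (FreeGroup.of (6 : Fin 7))⁻¹) := by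
  simp only [map_mul, rho_of, Equiv.Perm.mul_apply, rhoGen_apply]
  decide

lemma basis_mem : ∀ j : Fin 7, basis j ∈ MonoidHom.ker (twinPerm 3) := by
  intro j
  rw [MonoidHom.mem_ker]
  fin_cases j
  exacts [bker0, bker1, bker2, bker3, bker4, bker5, bker6]

lemma hpf : ∀ j : Fin 7, rho (basis j) (0, 1) = ((0 : Fin 24), (FreeGroup.of j)⁻¹) := by
  intro j
  fin_cases j
  exacts [hpf0, hpf1, hpf2, hpf3, hpf4, hpf5, hpf6]

lemma ker_fst (k : G) (hk : twinPerm 3 k = 1) : (rho k (0, 1)).1 = 0 := by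
  have h2 := (Phi_all k).2.1 0
  rw [hk, one_mul] at h2
  exact idx_inj _ _ h2

def psi : ↥(MonoidHom.ker (twinPerm 3)) →* F7 where
  toFun k := ((rho (k : G) (0, 1)).2)⁻¹
  map_one' := by
    show ((rho ((1 : ↥(MonoidHom.ker (twinPerm 3))) : G) (0, 1)).2)⁻¹ = 1
    rw [OneMemClass.coe_one, map_one]
    rfl
  map_mul' k l := by
    show ((rho ((↑(k * l) : G)) (0, 1)).2)⁻¹ = _
    have hco : ((↑(k * l) : G)) = (k : G) * (l : G) := rfl
    have hl1 : rho (l : G) (0, 1) = ((0 : Fin 24), (rho (l : G) (0, 1)).2) :=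
      Prod.ext (ker_fst _ (MonoidHom.mem_ker.mp l.2)) rfl
    rw [hco, rho_mul_apply, hl1, (Phi_all (k : G)).1 ((0 : Fin 24), (rho (l : G) (0, 1)).2)]
    show ((rho (l : G) (0, 1)).2 * (rho (k : G) (0, 1)).2)⁻¹ = _
    rw [mul_inv_rev]

def phiK : F7 →* ↥(MonoidHom.ker (twinPerm 3)) :=
  FreeGroup.lift fun j => ⟨basis j, basis_mem j⟩

lemma phiK_val (x : F7) : ((phiK x) : G) = FreeGroup.lift basis x := by
  have h : (MonoidHom.ker (twinPerm 3)).subtype.comp phiK = FreeGroup.lift basis := by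
    apply FreeGroup.ext_hom
    intro a
    simp [phiK]
  exact DFunLike.congr_fun h x

lemma phiK_psi : ∀ k : ↥(MonoidHom.ker (twinPerm 3)), phiK (psi k) = k := by
  intro k
  apply Subtype.ext
  rw [phiK_val]
  show FreeGroup.lift basis (((rho (k : G) (0, 1)).2)⁻¹) = (k : G)
  rw [map_inv]
  have h3 := (Phi_all (k : G)).2.2 0
  rw [ker_fst _ (MonoidHom.mem_ker.mp k.2)] at h3
  have ht0 : trans 0 = 1 := rfl
  rw [ht0, mul_one, one_mul] at h3
  exact h3.symm

lemma psi_phiK : ∀ x : F7, psi (phiK x) = x := by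
  have h : psi.comp phiK = MonoidHom.id F7 := by
    apply FreeGroup.ext_hom
    intro j
    show psi (phiK (FreeGroup.of j)) = FreeGroup.of j
    rw [show phiK (FreeGroup.of j) = ⟨basis j, basis_mem j⟩ from FreeGroup.lift_apply_of]
    show ((rho (basis j) (0, 1)).2)⁻¹ = FreeGroup.of j
    have h2 : (rho (basis j) (0, 1)).2 = (FreeGroup.of j)⁻¹ := by rw [hpf j]
    rw [h2, inv_inv]
  intro x
  exact DFunLike.congr_fun h x

end PureTwinAux


/-- The pure twin group `P̄₄` is free of rank 7. -/
theorem pureTwin_four_free :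
    Nonempty ((MonoidHom.ker (twinPerm 3)) ≃* FreeGroup (Fin 7)) := by
  exact ⟨{ toFun := PureTwinAux.psi, invFun := PureTwinAux.phiK,
           left_inv := PureTwinAux.phiK_psi, right_inv := PureTwinAux.psi_phiK,
           map_mul' := map_mul PureTwinAux.psi }⟩
end

section
/- The pure twin group \(\overline{P}_5\) is isomorphic to the free group \(F_{31}\) of rank 31. -/
namespace PT5
open Equiv FreeGroup

abbrev Q5 := Equiv.Perm (Fin 5)
abbrev TG := TwinGroup 4

def σ (i : Fin 4) : TG := PresentedGroup.of i
def τ (i : Fin 4) : Q5 := Equiv.swap i.castSucc i.succ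

lemma rel_one {r : FreeGroup (Fin 4)} (h : r ∈ twinRels 4) :
    PresentedGroup.mk (twinRels 4) r = 1 := by
  change (QuotientGroup.mk r : TG) = 1
  rw [QuotientGroup.eq_one_iff]
  exact Subgroup.subset_normalClosure h

lemma sq (i : Fin 4) : σ i * σ i = 1 := by
  have := rel_one (r := .of i * .of i) (Or.inl ⟨i, rfl⟩)
  simpa [σ, PresentedGroup.of] using this

lemma commrel {i j : Fin 4} (h : (i : ℕ) + 1 < j) : σ i * σ j = σ j * σ i := by
  have := rel_one (r := .of i * .of j * (.of i)⁻¹ * (.of j)⁻¹) (Or.inr ⟨i, j, h, rfl⟩)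
  have h2 : (PresentedGroup.mk (twinRels 4)) (.of i * .of j * (.of i)⁻¹ * (.of j)⁻¹)
      = σ i * σ j * (σ i)⁻¹ * (σ j)⁻¹ := by
    simp [σ, PresentedGroup.of, map_mul, map_inv]
  rw [h2] at this
  have h3 : σ i * σ j * (σ i)⁻¹ * (σ j)⁻¹ * (σ j * σ i) = 1 * (σ j * σ i) := by rw [this]
  simpa [mul_assoc] using h3

lemma sigma_inv (i : Fin 4) : (σ i)⁻¹ = σ i :=
  inv_eq_of_mul_eq_one_right (sq i)

/-- Insertion of a generator into a (normal form) word. -/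
def ins (i : Fin 4) : List (Fin 4) → List (Fin 4)
  | [] => [i]
  | j :: t => if i = j then t else if (j : ℕ) + 1 < (i : ℕ) then j :: ins i t else i :: j :: t

def nfList (u : List (Fin 4)) : List (Fin 4) := u.foldr ins []

def tw : List (Fin 4) → TG
  | [] => 1
  | i :: t => σ i * tw t

lemma tw_ins (i : Fin 4) (l : List (Fin 4)) : tw (ins i l) = σ i * tw l := by
  induction l with
  | nil => simp [ins, tw]
  | cons j t ih =>
    by_cases h1 : i = j
    · subst h1
      rw [show ins i (i :: t) = t from by simp [ins], tw, ← mul_assoc, sq, one_mul]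
    · by_cases h2 : (j : ℕ) + 1 < (i : ℕ)
      · simp only [ins, if_neg h1, if_pos h2, tw, ih, ← mul_assoc, commrel h2]
      · simp only [ins, if_neg h1, if_neg h2, tw]

lemma tw_nf (u : List (Fin 4)) : tw (nfList u) = tw u := by
  induction u with
  | nil => rfl
  | cons a u ih =>
    show tw (ins a (nfList u)) = tw (a :: u)
    rw [tw_ins, ih, tw]

lemma tw_eq_of_nf {u v : List (Fin 4)} (h : nfList u = nfList v) : tw u = tw v := by
  rw [← tw_nf u, ← tw_nf v, h]

lemma tw_append (u v : List (Fin 4)) : tw (u ++ v) = tw u * tw v := by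
  induction u with
  | nil => simp [tw]
  | cons a u ih => simp [tw, ih, mul_assoc]

lemma tw_inv (l : List (Fin 4)) : (tw l)⁻¹ = tw l.reverse := by
  induction l with
  | nil => simp [tw]
  | cons a l ih => simp [tw, mul_inv_rev, ih, tw_append, sigma_inv]


def rsData : List (List (Fin 5) × List (Fin 4) × List (Fin 31 × Bool) × List (Fin 31 × Bool) × List (Fin 31 × Bool) × List (Fin 31 × Bool)) := [
  ([0,1,2,3,4], [], [], [], [], []),
  ([1,0,2,3,4], [0], [], [], [], []),
  ([0,2,1,3,4], [1], [], [], [], []),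
  ([0,1,3,2,4], [2], [], [], [], []),
  ([0,1,2,4,3], [3], [], [], [], []),
  ([1,2,0,3,4], [0,1], [], [], [], []),
  ([1,0,3,2,4], [0,2], [], [], [], []),
  ([1,0,2,4,3], [0,3], [], [], [], []),
  ([2,0,1,3,4], [1,0], [], [(13,true)], [], []),
  ([0,2,3,1,4], [1,2], [], [], [], []),
  ([0,2,1,4,3], [1,3], [], [], [], []),
  ([0,3,1,2,4], [2,1], [], [], [(2,true)], []),
  ([0,1,3,4,2], [2,3], [], [], [], []),
  ([0,1,4,2,3], [3,2], [], [], [], [(0,true)]),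
  ([2,1,0,3,4], [0,1,0], [], [(13,false)], [], []),
  ([1,2,3,0,4], [0,1,2], [], [], [], []),
  ([1,2,0,4,3], [0,1,3], [], [], [], []),
  ([1,3,0,2,4], [0,2,1], [], [], [(8,true)], []),
  ([1,0,3,4,2], [0,2,3], [], [], [], []),
  ([1,0,4,2,3], [0,3,2], [], [], [], [(0,true)]),
  ([2,0,3,1,4], [1,0,2], [], [], [], []),
  ([2,0,1,4,3], [1,0,3], [], [(13,true)], [], []),
  ([0,3,2,1,4], [1,2,1], [], [], [(2,false)], []),
  ([0,2,3,4,1], [1,2,3], [], [], [], []),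
  ([0,2,4,1,3], [1,3,2], [], [], [], [(1,true)]),
  ([3,0,1,2,4], [2,1,0], [], [(19,true)], [(2,true)], []),
  ([0,3,1,4,2], [2,1,3], [], [], [], []),
  ([0,1,4,3,2], [2,3,2], [], [], [], [(0,false)]),
  ([0,4,1,2,3], [3,2,1], [], [], [(4,true)], [(0,true)]),
  ([2,1,3,0,4], [0,1,0,2], [], [], [], []),
  ([2,1,0,4,3], [0,1,0,3], [], [(13,false)], [], []),
  ([1,3,2,0,4], [0,1,2,1], [], [], [(8,false)], []),
  ([1,2,3,4,0], [0,1,2,3], [], [], [], []),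
  ([1,2,4,0,3], [0,1,3,2], [], [], [], [(7,true)]),
  ([3,1,0,2,4], [0,2,1,0], [], [(19,false)], [(8,true)], []),
  ([1,3,0,4,2], [0,2,1,3], [], [], [], []),
  ([1,0,4,3,2], [0,2,3,2], [], [], [], [(0,false)]),
  ([1,4,0,2,3], [0,3,2,1], [], [], [(10,true)], [(0,true)]),
  ([2,3,0,1,4], [1,0,2,1], [], [], [(14,true)], []),
  ([2,0,3,4,1], [1,0,2,3], [], [], [], []),
  ([2,0,4,1,3], [1,0,3,2], [], [], [], [(1,true)]),
  ([3,0,2,1,4], [1,2,1,0], [], [(20,true)], [(2,false)], []),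
  ([0,3,2,4,1], [1,2,1,3], [], [], [], []),
  ([0,2,4,3,1], [1,2,3,2], [], [], [], [(1,false)]),
  ([0,4,2,1,3], [1,3,2,1], [], [], [(4,false)], [(1,true)]),
  ([3,0,1,4,2], [2,1,0,3], [], [(19,true)], [], []),
  ([0,3,4,1,2], [2,1,3,2], [], [], [], [(3,true)]),
  ([0,4,1,3,2], [2,3,2,1], [], [], [(5,true)], [(0,false)]),
  ([4,0,1,2,3], [3,2,1,0], [], [(0,true),(25,true),(0,false)], [(4,true)], [(0,true)]),
  ([2,3,1,0,4], [0,1,0,2,1], [], [], [(14,false)], []),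
  ([2,1,3,4,0], [0,1,0,2,3], [], [], [], []),
  ([2,1,4,0,3], [0,1,0,3,2], [], [], [], [(7,true)]),
  ([3,1,2,0,4], [0,1,2,1,0], [], [(21,true)], [(8,false)], []),
  ([1,3,2,4,0], [0,1,2,1,3], [], [], [], []),
  ([1,2,4,3,0], [0,1,2,3,2], [], [], [], [(7,false)]),
  ([1,4,2,0,3], [0,1,3,2,1], [], [], [(10,false)], [(7,true)]),
  ([3,1,0,4,2], [0,2,1,0,3], [], [(19,false)], [], []),
  ([1,3,4,0,2], [0,2,1,3,2], [], [], [], [(9,true)]),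
  ([1,4,0,3,2], [0,2,3,2,1], [], [], [(11,true)], [(0,false)]),
  ([4,1,0,2,3], [0,3,2,1,0], [], [(0,true),(25,false),(0,false)], [(10,true)], [(0,true)]),
  ([3,2,0,1,4], [1,0,2,1,0], [], [(20,false)], [(14,true)], []),
  ([2,3,0,4,1], [1,0,2,1,3], [], [], [], []),
  ([2,0,4,3,1], [1,0,2,3,2], [], [], [], [(1,false)]),
  ([2,4,0,1,3], [1,0,3,2,1], [], [], [(16,true)], [(1,true)]),
  ([3,0,2,4,1], [1,2,1,0,3], [], [(20,true)], [], []),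
  ([0,3,4,2,1], [1,2,1,3,2], [], [], [], [(3,false)]),
  ([0,4,2,3,1], [1,2,3,2,1], [], [], [(6,true)], [(1,false)]),
  ([4,0,2,1,3], [1,3,2,1,0], [], [(1,true),(26,true),(1,false)], [(4,false)], [(1,true)]),
  ([3,0,4,1,2], [2,1,0,3,2], [], [], [], [(3,true)]),
  ([0,4,3,1,2], [2,1,3,2,1], [], [], [(5,false)], [(3,true)]),
  ([4,0,1,3,2], [2,3,2,1,0], [], [(25,true)], [(5,true)], [(0,false)]),
  ([3,2,1,0,4], [0,1,0,2,1,0], [], [(21,false)], [(14,false)], []),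
  ([2,3,1,4,0], [0,1,0,2,1,3], [], [], [], []),
  ([2,1,4,3,0], [0,1,0,2,3,2], [], [], [], [(7,false)]),
  ([2,4,1,0,3], [0,1,0,3,2,1], [], [], [(16,false)], [(7,true)]),
  ([3,1,2,4,0], [0,1,2,1,0,3], [], [(21,true)], [], []),
  ([1,3,4,2,0], [0,1,2,1,3,2], [], [], [], [(9,false)]),
  ([1,4,2,3,0], [0,1,2,3,2,1], [], [], [(12,true)], [(7,false)]),
  ([4,1,2,0,3], [0,1,3,2,1,0], [], [(7,true),(28,true),(7,false)], [(10,false)], [(7,true)]),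
  ([3,1,4,0,2], [0,2,1,0,3,2], [], [], [], [(9,true)]),
  ([1,4,3,0,2], [0,2,1,3,2,1], [], [], [(11,false)], [(9,true)]),
  ([4,1,0,3,2], [0,2,3,2,1,0], [], [(25,false)], [(11,true)], [(0,false)]),
  ([3,2,0,4,1], [1,0,2,1,0,3], [], [(20,false)], [], []),
  ([2,3,4,0,1], [1,0,2,1,3,2], [], [], [], [(15,true)]),
  ([2,4,0,3,1], [1,0,2,3,2,1], [], [], [(17,true)], [(1,false)]),
  ([4,2,0,1,3], [1,0,3,2,1,0], [], [(1,true),(26,false),(1,false)], [(16,true)], [(1,true)]),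
  ([3,0,4,2,1], [1,2,1,0,3,2], [], [], [], [(3,false)]),
  ([0,4,3,2,1], [1,2,1,3,2,1], [], [], [(6,false)], [(3,false)]),
  ([4,0,2,3,1], [1,2,3,2,1,0], [], [(26,true)], [(6,true)], [(1,false)]),
  ([3,4,0,1,2], [2,1,0,3,2,1], [], [], [(22,true)], [(3,true)]),
  ([4,0,3,1,2], [2,1,3,2,1,0], [], [(3,true),(27,true),(3,false)], [(5,false)], [(3,true)]),
  ([3,2,1,4,0], [0,1,0,2,1,0,3], [], [(21,false)], [], []),
  ([2,3,4,1,0], [0,1,0,2,1,3,2], [], [], [], [(15,false)]),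
  ([2,4,1,3,0], [0,1,0,2,3,2,1], [], [], [(18,true)], [(7,false)]),
  ([4,2,1,0,3], [0,1,0,3,2,1,0], [], [(7,true),(28,false),(7,false)], [(16,false)], [(7,true)]),
  ([3,1,4,2,0], [0,1,2,1,0,3,2], [], [], [], [(9,false)]),
  ([1,4,3,2,0], [0,1,2,1,3,2,1], [], [], [(12,false)], [(9,false)]),
  ([4,1,2,3,0], [0,1,2,3,2,1,0], [], [(28,true)], [(12,true)], [(7,false)]),
  ([3,4,1,0,2], [0,2,1,0,3,2,1], [], [], [(22,false)], [(9,true)]),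
  ([4,1,3,0,2], [0,2,1,3,2,1,0], [], [(9,true),(29,true),(9,false)], [(11,false)], [(9,true)]),
  ([3,2,4,0,1], [1,0,2,1,0,3,2], [], [], [], [(15,true)]),
  ([2,4,3,0,1], [1,0,2,1,3,2,1], [], [], [(17,false)], [(15,true)]),
  ([4,2,0,3,1], [1,0,2,3,2,1,0], [], [(26,false)], [(17,true)], [(1,false)]),
  ([3,4,0,2,1], [1,2,1,0,3,2,1], [], [], [(23,true)], [(3,false)]),
  ([4,0,3,2,1], [1,2,1,3,2,1,0], [], [(27,true)], [(6,false)], [(3,false)]),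
  ([4,3,0,1,2], [2,1,0,3,2,1,0], [], [(3,true),(27,false),(3,false)], [(22,true)], [(3,true)]),
  ([3,2,4,1,0], [0,1,0,2,1,0,3,2], [], [], [], [(15,false)]),
  ([2,4,3,1,0], [0,1,0,2,1,3,2,1], [], [], [(18,false)], [(15,false)]),
  ([4,2,1,3,0], [0,1,0,2,3,2,1,0], [], [(28,false)], [(18,true)], [(7,false)]),
  ([3,4,1,2,0], [0,1,2,1,0,3,2,1], [], [], [(24,true)], [(9,false)]),
  ([4,1,3,2,0], [0,1,2,1,3,2,1,0], [], [(29,true)], [(12,false)], [(9,false)]),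
  ([4,3,1,0,2], [0,2,1,0,3,2,1,0], [], [(9,true),(29,false),(9,false)], [(22,false)], [(9,true)]),
  ([3,4,2,0,1], [1,0,2,1,0,3,2,1], [], [], [(23,false)], [(15,true)]),
  ([4,2,3,0,1], [1,0,2,1,3,2,1,0], [], [(15,true),(30,true),(15,false)], [(17,false)], [(15,true)]),
  ([4,3,0,2,1], [1,2,1,0,3,2,1,0], [], [(27,false)], [(23,true)], [(3,false)]),
  ([3,4,2,1,0], [0,1,0,2,1,0,3,2,1], [], [], [(24,false)], [(15,false)]),
  ([4,2,3,1,0], [0,1,0,2,1,3,2,1,0], [], [(30,true)], [(18,false)], [(15,false)]),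
  ([4,3,1,2,0], [0,1,2,1,0,3,2,1,0], [], [(29,false)], [(24,true)], [(9,false)]),
  ([4,3,2,0,1], [1,0,2,1,0,3,2,1,0], [], [(15,true),(30,false),(15,false)], [(23,false)], [(15,true)]),
  ([4,3,2,1,0], [0,1,0,2,1,0,3,2,1,0], [], [(30,false)], [(24,false)], [(15,false)])
]

def xData : List (List (Fin 4)) := [
  [3,2,3,2,3,2],
  [1,3,2,3,2,3,2,1],
  [2,1,2,1,2,1],
  [2,1,3,2,3,2,3,1,2,1],
  [3,2,1,2,1,2,3,1],
  [2,3,2,1,2,1,2,3,1,2],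
  [1,2,3,2,1,2,1,2,3,1,2,1],
  [0,1,3,2,3,2,3,2,1,0],
  [0,2,1,2,1,2,1,0],
  [0,2,1,3,2,3,2,3,1,2,1,0],
  [0,3,2,1,2,1,2,3,1,0],
  [0,2,3,2,1,2,1,2,3,1,2,0],
  [0,1,2,3,2,1,2,1,2,3,1,2,1,0],
  [1,0,3,1,3,0,1,0],
  [1,0,2,1,2,1,2,0,1,0],
  [1,0,2,1,3,2,3,2,3,1,2,0,1,0],
  [1,0,3,2,1,2,1,2,3,0,1,0],
  [1,0,2,3,2,1,2,1,2,3,1,2,0,1],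
  [0,1,0,2,3,2,1,2,1,2,3,1,2,0,1,0],
  [2,1,0,3,1,3,0,1,2,0],
  [1,2,1,0,3,1,3,0,1,2,0,1],
  [0,1,2,1,0,3,1,3,0,1,2,0,1,0],
  [2,1,0,3,2,1,2,1,2,3,0,1,2,0],
  [1,2,1,0,3,2,1,2,1,2,3,0,1,2,0,1],
  [0,1,2,1,0,3,2,1,2,1,2,3,0,1,2,0,1,0],
  [2,3,2,1,0,1,0,1,2,3,2,0],
  [1,2,3,2,1,0,1,0,1,2,3,2,0,1],
  [1,2,1,3,2,1,0,1,0,1,2,3,0,1,2,1],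
  [0,1,2,3,2,1,0,1,0,1,2,3,2,0,1,0],
  [0,1,2,1,3,2,1,0,1,0,1,2,3,0,1,2,1,0],
  [0,1,0,2,1,3,2,1,0,1,0,1,2,3,0,1,2,0,1,0]
]

abbrev Entry := List (Fin 5) × List (Fin 4) × List (Fin 31 × Bool) × List (Fin 31 × Bool) × List (Fin 31 × Bool) × List (Fin 31 × Bool)

def entry (k : List (Fin 5)) : Entry :=
  (rsData.find? (fun e => decide (e.1 = k))).getD (k, [], [], [], [], [])

def Ttab (k : List (Fin 5)) : List (Fin 4) := (entry k).2.1

def Wtab (k : List (Fin 5)) (i : Fin 4) : List (Fin 31 × Bool) :=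
  match (i : ℕ) with
  | 0 => (entry k).2.2.1
  | 1 => (entry k).2.2.2.1
  | 2 => (entry k).2.2.2.2.1
  | _ => (entry k).2.2.2.2.2

def Xw (k : Fin 31) : List (Fin 4) := xData.getD (k : ℕ) []

def swapPos (i : Fin 4) (k : List (Fin 5)) : List (Fin 5) :=
  match (i : ℕ), k with
  | 0, a :: b :: r => b :: a :: r
  | 1, a :: b :: c :: r => a :: c :: b :: r
  | 2, a :: b :: c :: d :: r => a :: b :: d :: c :: r
  | 3, a :: b :: c :: d :: e :: r => a :: b :: c :: e :: d :: r
  | _, l => l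

def evalX : List (Fin 31 × Bool) → List (Fin 4)
  | [] => []
  | (k, true) :: L => Xw k ++ evalX L
  | (k, false) :: L => (Xw k).reverse ++ evalX L

def collectS : List (Fin 5) → List (Fin 4 × Bool) → List (Fin 31 × Bool)
  | _, [] => []
  | k, (i, true) :: L => Wtab k i ++ collectS (swapPos i k) L
  | k, (i, false) :: L => FreeGroup.invRev (Wtab (swapPos i k) i) ++ collectS (swapPos i k) L

def key0 : List (Fin 5) := [0, 1, 2, 3, 4]

def keyOf (s : Q5) : List (Fin 5) := [s 0, s 1, s 2, s 3, s 4]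



set_option maxRecDepth 1000000 in
set_option maxHeartbeats 0 in
lemma chk1a : rsData.all (fun e => (List.finRange 4).all (fun i =>
    decide (FreeGroup.reduce (collectS e.1 [(i, true), (i, true)]) = []))) = true := by decide

set_option maxRecDepth 1000000 in
set_option maxHeartbeats 0 in
lemma chk1b : rsData.all (fun e => ([((0:Fin 4),(2:Fin 4)), (0,3), (1,3)]).all (fun p =>
    decide (FreeGroup.reduce (collectS e.1 [(p.1, true), (p.2, true), (p.1, false), (p.2, false)]) = []))) = true := by decide

set_option maxRecDepth 1000000 in
set_option maxHeartbeats 0 in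
lemma chk2 : rsData.all (fun e => (List.finRange 4).all (fun i =>
    decide (nfList (evalX (Wtab e.1 i)) =
      nfList (Ttab e.1 ++ i :: (Ttab (swapPos i e.1)).reverse)))) = true := by decide


/-! ### Lookup infrastructure lemmas -/

set_option maxRecDepth 1000000 in
set_option maxHeartbeats 1000000 in
lemma keyswap : ∀ (i : Fin 4) (s : Q5), keyOf (s * τ i) = swapPos i (keyOf s) := by decide

set_option maxRecDepth 1000000 in
set_option maxHeartbeats 1000000 in
lemma cover : ∀ s : Q5, keyOf s ∈ rsData.map (·.1) := by decide

/-! ### The wreath product -/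

def permArrow (K : Type) [Group K] (q : Q5) : (Q5 → K) ≃* (Q5 → K) where
  toFun := fun f s => f (s * q)
  invFun := fun f s => f (s * q⁻¹)
  left_inv := fun f => funext fun s => by simp [mul_assoc]
  right_inv := fun f => funext fun s => by simp [mul_assoc]
  map_mul' := fun f g => rfl

def wrAct (K : Type) [Group K] : Q5 →* MulAut (Q5 → K) where
  toFun := permArrow K
  map_one' := by
    apply MulEquiv.ext; intro f; funext s
    simp [permArrow]
  map_mul' := fun a b => by
    apply MulEquiv.ext; intro f; funext s
    simp [permArrow, MulAut.mul_apply, mul_assoc]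

abbrev WG (K : Type) [Group K] := SemidirectProduct (Q5 → K) Q5 (wrAct K)

lemma wrAct_apply {K : Type} [Group K] (q : Q5) (f : Q5 → K) (s : Q5) :
    wrAct K q f s = f (s * q) := rfl

/-! ### The monomial representation Θ into the wreath product over the free group -/

abbrev F31 := FreeGroup (Fin 31)

def θgen (i : Fin 4) : WG F31 :=
  ⟨fun s => FreeGroup.mk (Wtab (keyOf s) i), τ i⟩

def τhom : FreeGroup (Fin 4) →* Q5 := FreeGroup.lift τ

lemma τhom_of (i : Fin 4) : τhom (FreeGroup.of i) = τ i := FreeGroup.lift_apply_of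

lemma lift_θgen (L : List (Fin 4 × Bool)) :
    FreeGroup.lift θgen (FreeGroup.mk L) =
      ⟨fun s => FreeGroup.mk (collectS (keyOf s) L), τhom (FreeGroup.mk L)⟩ := by
  induction L with
  | nil =>
    rw [← FreeGroup.one_eq_mk, _root_.map_one, _root_.map_one]
    exact SemidirectProduct.ext (funext fun s => FreeGroup.one_eq_mk) rfl
  | cons a L ih =>
    obtain ⟨i, b⟩ := a
    have hsplit : FreeGroup.mk ((i, b) :: L) = FreeGroup.mk [(i, b)] * FreeGroup.mk L := by
      rw [FreeGroup.mul_mk]; rfl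
    cases b
    · have hneg : (FreeGroup.mk [(i, false)] : FreeGroup (Fin 4)) = (FreeGroup.of i)⁻¹ := rfl
      rw [hsplit, hneg, _root_.map_mul, _root_.map_mul, _root_.map_inv, _root_.map_inv,
        FreeGroup.lift_apply_of, τhom_of, ih]
      refine SemidirectProduct.ext (funext fun s => ?_) rfl
      show (θgen i)⁻¹.left s * wrAct F31 (θgen i)⁻¹.right
          (fun s => FreeGroup.mk (collectS (keyOf s) L)) s = _
      rw [SemidirectProduct.inv_left, SemidirectProduct.inv_right]
      show wrAct F31 (τ i)⁻¹ (θgen i).left⁻¹ s *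
          (fun s => FreeGroup.mk (collectS (keyOf s) L)) (s * (τ i)⁻¹) = _
      rw [show (τ i)⁻¹ = τ i from Equiv.swap_inv _ _]
      show (FreeGroup.mk (Wtab (keyOf (s * τ i)) i))⁻¹ *
          FreeGroup.mk (collectS (keyOf (s * τ i)) L) = _
      rw [FreeGroup.inv_mk, keyswap, FreeGroup.mul_mk]
      rfl
    · have hpos : (FreeGroup.mk [(i, true)] : FreeGroup (Fin 4)) = FreeGroup.of i := rfl
      rw [hsplit, hpos, _root_.map_mul, _root_.map_mul, FreeGroup.lift_apply_of, τhom_of, ih]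
      refine SemidirectProduct.ext (funext fun s => ?_) rfl
      show (θgen i).left s * wrAct F31 (θgen i).right
          (fun s => FreeGroup.mk (collectS (keyOf s) L)) s = _
      show FreeGroup.mk (Wtab (keyOf s) i) * FreeGroup.mk (collectS (keyOf (s * τ i)) L) = _
      rw [keyswap, FreeGroup.mul_mk]
      rfl

lemma collect_nil {L : List (Fin 4 × Bool)} {s : Q5}
    (h : FreeGroup.reduce (α := Fin 31) (collectS (keyOf s) L) = []) :
    (FreeGroup.mk (collectS (keyOf s) L) : F31) = 1 := by
  rw [← FreeGroup.toWord_inj, FreeGroup.toWord_mk, FreeGroup.toWord_one, h]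

lemma hθ : ∀ r ∈ twinRels 4, FreeGroup.lift θgen r = 1 := by
  have hmem : ∀ (s : Q5), ∃ e ∈ rsData, e.1 = keyOf s := by
    intro s
    obtain ⟨e, he, h⟩ := List.mem_map.mp (cover s)
    exact ⟨e, he, h⟩
  rintro r (⟨i, rfl⟩ | ⟨i, j, hij, rfl⟩)
  · have h1 : (FreeGroup.of i * FreeGroup.of i : FreeGroup (Fin 4)) =
        FreeGroup.mk [(i, true), (i, true)] := rfl
    rw [h1, lift_θgen]
    refine SemidirectProduct.ext (funext fun s => ?_) ?_
    · show FreeGroup.mk (collectS (keyOf s) [(i, true), (i, true)]) = 1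
      apply collect_nil
      obtain ⟨e, he, hk⟩ := hmem s
      have := List.all_eq_true.mp chk1a e he
      have := List.all_eq_true.mp this i (List.mem_finRange i)
      rw [← hk]
      exact of_decide_eq_true this
    · show τhom (FreeGroup.mk [(i, true), (i, true)]) = 1
      rw [← h1]
      exact twinRels_hold 4 _ (Or.inl ⟨i, rfl⟩)
  · have h1 : (FreeGroup.of i * FreeGroup.of j * (FreeGroup.of i)⁻¹ * (FreeGroup.of j)⁻¹ :
        FreeGroup (Fin 4)) = FreeGroup.mk [(i, true), (j, true), (i, false), (j, false)] := rfl
    rw [h1, lift_θgen]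
    refine SemidirectProduct.ext (funext fun s => ?_) ?_
    · show FreeGroup.mk (collectS (keyOf s) [(i, true), (j, true), (i, false), (j, false)]) = 1
      apply collect_nil
      obtain ⟨e, he, hk⟩ := hmem s
      have hall := List.all_eq_true.mp chk1b e he
      rw [← hk]
      fin_cases i <;> fin_cases j <;>
        first
          | (exact absurd hij (by decide))
          | (exact of_decide_eq_true
              (List.all_eq_true.mp hall ((0 : Fin 4), (2 : Fin 4)) (by decide)))
          | (exact of_decide_eq_true
              (List.all_eq_true.mp hall ((0 : Fin 4), (3 : Fin 4)) (by decide)))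
          | (exact of_decide_eq_true
              (List.all_eq_true.mp hall ((1 : Fin 4), (3 : Fin 4)) (by decide)))
    · show τhom (FreeGroup.mk [(i, true), (j, true), (i, false), (j, false)]) = 1
      rw [← h1]
      exact twinRels_hold 4 _ (Or.inr ⟨i, j, hij, rfl⟩)

def Θ : TG →* WG F31 := PresentedGroup.toGroup hθ


/-! ### Relating Θ, tw, and the permutation homomorphism -/

def π' : TG →* Q5 := twinPerm 4

lemma π'_σ (i : Fin 4) : π' (σ i) = τ i := PresentedGroup.toGroup.of (twinRels_hold 4)

lemma Θ_σ (i : Fin 4) : Θ (σ i) = θgen i := PresentedGroup.toGroup.of hθ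

def permList (l : List (Fin 4)) : Q5 := l.foldr (fun i p => τ i * p) 1

lemma twinPerm_tw (l : List (Fin 4)) : π' (tw l) = permList l := by
  induction l with
  | nil => simp [tw, permList]
  | cons i t ih => rw [tw, _root_.map_mul, π'_σ, ih]; rfl

lemma Θ_tw (l : List (Fin 4)) :
    Θ (tw l) = FreeGroup.lift θgen (FreeGroup.mk (l.map fun i => (i, true))) := by
  induction l with
  | nil =>
    rw [List.map_nil, ← FreeGroup.one_eq_mk, _root_.map_one]
    rfl
  | cons i t ih =>
    have : (FreeGroup.mk ((i, true) :: t.map fun i => (i, true)) : FreeGroup (Fin 4)) =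
        FreeGroup.of i * FreeGroup.mk (t.map fun i => (i, true)) := rfl
    rw [tw, _root_.map_mul, Θ_σ, ih, List.map_cons, this, _root_.map_mul, FreeGroup.lift_apply_of]

/-! ### The two homomorphisms into the wreath product over the twin group -/

def Φ' : F31 →* TG := FreeGroup.lift fun k => tw (Xw k)

lemma Φ'_mk (L : List (Fin 31 × Bool)) : Φ' (FreeGroup.mk L) = tw (evalX L) := by
  induction L with
  | nil => rw [← FreeGroup.one_eq_mk, _root_.map_one]; rfl
  | cons a L ih =>
    obtain ⟨k, b⟩ := a
    have hsplit : FreeGroup.mk ((k, b) :: L) = FreeGroup.mk [(k, b)] * FreeGroup.mk L := rfl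
    cases b
    · have hneg : (FreeGroup.mk [(k, false)] : F31) = (FreeGroup.of k)⁻¹ := rfl
      rw [hsplit, hneg, _root_.map_mul, _root_.map_inv,
        show Φ' (FreeGroup.of k) = tw (Xw k) from FreeGroup.lift_apply_of, ih, tw_inv, ← tw_append]
      rfl
    · have hpos : (FreeGroup.mk [(k, true)] : F31) = FreeGroup.of k := rfl
      rw [hsplit, hpos, _root_.map_mul,
        show Φ' (FreeGroup.of k) = tw (Xw k) from FreeGroup.lift_apply_of, ih, ← tw_append]
      rfl

def Wmap : WG F31 →* WG TG where
  toFun x := ⟨fun s => Φ' (x.left s), x.right⟩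
  map_one' := by
    refine SemidirectProduct.ext (funext fun s => ?_) rfl
    show Φ' ((1 : WG F31).left s) = _
    rw [SemidirectProduct.one_left]
    show Φ' 1 = (1 : WG TG).left s
    rw [_root_.map_one, SemidirectProduct.one_left]
    rfl
  map_mul' := fun a b => by
    refine SemidirectProduct.ext (funext fun s => ?_) rfl
    show Φ' ((a * b).left s) = _
    rw [SemidirectProduct.mul_left]
    show Φ' (a.left s * b.left (s * a.right)) = _
    rw [_root_.map_mul]
    rfl

def T' (s : Q5) : TG := tw (Ttab (keyOf s))

def Bmap : TG →* WG TG where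
  toFun g := ⟨fun s => T' s * g * (T' (s * π' g))⁻¹, π' g⟩
  map_one' := by
    refine SemidirectProduct.ext (funext fun s => ?_) (_root_.map_one π')
    show T' s * 1 * (T' (s * π' 1))⁻¹ = (1 : WG TG).left s
    rw [_root_.map_one, mul_one, mul_one, mul_inv_cancel, SemidirectProduct.one_left]
    rfl
  map_mul' := fun g h => by
    refine SemidirectProduct.ext (funext fun s => ?_) (_root_.map_mul π' g h)
    show T' s * (g * h) * (T' (s * π' (g * h)))⁻¹ = _
    rw [SemidirectProduct.mul_left]
    show _ = (T' s * g * (T' (s * π' g))⁻¹) *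
        (T' (s * π' g) * h * (T' (s * π' g * π' h))⁻¹)
    rw [_root_.map_mul π', ← mul_assoc s (π' g) (π' h)]
    group

set_option maxRecDepth 1000000 in
set_option maxHeartbeats 1000000 in
lemma Ttab_key0 : Ttab key0 = [] := by decide

lemma T'_one : T' 1 = 1 := by
  have : keyOf 1 = key0 := rfl
  rw [T', this, Ttab_key0]
  rfl

lemma AB : Wmap.comp Θ = Bmap := by
  apply PresentedGroup.ext
  intro i
  show Wmap (Θ (σ i)) = Bmap (σ i)
  rw [Θ_σ]
  refine SemidirectProduct.ext (funext fun s => ?_) ?_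
  · show Φ' (FreeGroup.mk (Wtab (keyOf s) i)) = (Bmap (σ i)).left s
    show _ = T' s * σ i * (T' (s * π' (σ i)))⁻¹
    rw [π'_σ, Φ'_mk, T', T', keyswap, tw_inv,
      show (σ i : TG) = tw [i] from (mul_one (σ i)).symm.trans rfl, ← tw_append, ← tw_append]
    apply tw_eq_of_nf
    obtain ⟨e, he, hk⟩ := List.mem_map.mp (cover s)
    have hall := List.all_eq_true.mp (List.all_eq_true.mp chk2 e he) i (List.mem_finRange i)
    have := of_decide_eq_true hall
    rw [hk] at this
    simpa using this
  · show τ i = (Bmap (σ i)).right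
    show τ i = π' (σ i)
    rw [π'_σ]

/-! ### The inverse pair of homomorphisms -/

lemma right_Θ (g : TG) : (Θ g).right = π' g := by
  have : (SemidirectProduct.rightHom.comp Θ : TG →* Q5) = π' := by
    apply PresentedGroup.ext
    intro i
    show SemidirectProduct.rightHom (Θ (σ i)) = π' (σ i)
    rw [Θ_σ, π'_σ]
    rfl
  exact DFunLike.congr_fun this g

def Ψ : ↥(MonoidHom.ker (twinPerm 4)) →* F31 where
  toFun g := (Θ (g : TG)).left 1
  map_one' := by
    show (Θ ((1 : ↥(MonoidHom.ker (twinPerm 4))) : TG)).left 1 = 1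
    rw [show ((1 : ↥(MonoidHom.ker (twinPerm 4))) : TG) = 1 from rfl, _root_.map_one,
      SemidirectProduct.one_left]
    rfl
  map_mul' := fun g h => by
    show (Θ ((g : TG) * (h : TG))).left 1 = _
    rw [_root_.map_mul, SemidirectProduct.mul_left]
    show (Θ (g : TG)).left 1 * wrAct F31 ((Θ (g : TG)).right) ((Θ (h : TG)).left) 1 = _
    rw [right_Θ, show π' (g : TG) = 1 from g.2, wrAct_apply, mul_one]

set_option maxRecDepth 1000000 in
set_option maxHeartbeats 1000000 in
lemma chk4 : ∀ k : Fin 31, permList (Xw k) = 1 := by decide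

lemma Xker (k : Fin 31) : tw (Xw k) ∈ MonoidHom.ker (twinPerm 4) := by
  have : π' (tw (Xw k)) = 1 := by rw [twinPerm_tw]; exact chk4 k
  exact this

def fhom : F31 →* ↥(MonoidHom.ker (twinPerm 4)) :=
  FreeGroup.lift fun k => ⟨tw (Xw k), Xker k⟩

lemma fhom_val (x : F31) : ((fhom x : ↥(MonoidHom.ker (twinPerm 4))) : TG) = Φ' x := by
  have : (MonoidHom.ker (twinPerm 4)).subtype.comp fhom = Φ' := by
    apply FreeGroup.ext_hom
    intro k
    show ((fhom (FreeGroup.of k) : ↥(MonoidHom.ker (twinPerm 4))) : TG) = Φ' (FreeGroup.of k)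
    rw [show fhom (FreeGroup.of k) = ⟨tw (Xw k), Xker k⟩ from FreeGroup.lift_apply_of,
      show Φ' (FreeGroup.of k) = tw (Xw k) from FreeGroup.lift_apply_of]
  exact DFunLike.congr_fun this x

set_option maxRecDepth 1000000 in
set_option maxHeartbeats 1000000 in
lemma chk3 : ∀ k : Fin 31,
    FreeGroup.reduce (collectS key0 ((Xw k).map (fun i => (i, true)))) = [(k, true)] := by
  decide

lemma ΨfId : Ψ.comp fhom = MonoidHom.id F31 := by
  apply FreeGroup.ext_hom
  intro k
  show Ψ (fhom (FreeGroup.of k)) = FreeGroup.of k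
  rw [show fhom (FreeGroup.of k) = ⟨tw (Xw k), Xker k⟩ from FreeGroup.lift_apply_of]
  show (Θ (tw (Xw k))).left 1 = FreeGroup.of k
  rw [Θ_tw, lift_θgen]
  show FreeGroup.mk (collectS (keyOf 1) ((Xw k).map fun i => (i, true))) = FreeGroup.of k
  rw [show keyOf 1 = key0 from rfl, ← FreeGroup.toWord_inj, FreeGroup.toWord_mk, chk3 k,
    FreeGroup.toWord_of]

lemma fΨId : fhom.comp Ψ = MonoidHom.id ↥(MonoidHom.ker (twinPerm 4)) := by
  apply MonoidHom.ext
  intro g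
  apply Subtype.ext
  show ((fhom (Ψ g) : ↥(MonoidHom.ker (twinPerm 4))) : TG) = (g : TG)
  rw [fhom_val]
  have h2 := DFunLike.congr_fun AB (g : TG)
  have h3 : Φ' (Ψ g) = (Bmap (g : TG)).left 1 := by
    rw [← h2]
    rfl
  rw [h3]
  show T' 1 * (g : TG) * (T' (1 * π' (g : TG)))⁻¹ = (g : TG)
  rw [show π' (g : TG) = 1 from g.2, mul_one, T'_one]
  group

end PT5

/-- The pure twin group `P̄₅` is free of rank 31. -/
theorem pureTwin_five_free :
    Nonempty ((MonoidHom.ker (twinPerm 4)) ≃* FreeGroup (Fin 31)) :=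
  ⟨MonoidHom.toMulEquiv PT5.Ψ PT5.fhom PT5.fΨId PT5.ΨfId⟩
end

section
/- Let \(H \le \overline{B}_6\) be the subgroup of bicoloured braids, i.e., the preimage under the permutation homomorphism \(\pi : \overline{B}_6 \to S_6\) of the subgroup of permutations mapping the set \(\{1,2,3\}\) to itself. Then \(H\) is isomorphic to the free product \(A * A\) of two copies of the group \(A\). -/
/-- The pairs of indices (0-based: `aᵢ ↦ i - 1`) of commuting generators of the group `A`:
these encode the commutation relations `a₁a₃ = a₃a₁`, `a₁a₄ = a₄a₁`, `a₂a₃ = a₃a₂`,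
`a₂a₄ = a₄a₂`, `a₁a₇ = a₇a₁`, `a₁a₈ = a₈a₁`, `a₄a₅ = a₅a₄`, `a₄a₆ = a₆a₄`, `a₅a₈ = a₈a₅`. -/
def commPairs : List (Fin 8 × Fin 8) :=
  [(0, 2), (0, 3), (1, 2), (1, 3), (0, 6), (0, 7), (3, 4), (3, 5), (4, 7)]

/-- The defining relations of the group `A`: the generators `a₁, …, a₈` (indexed by `Fin 8`)
are involutions, and the pairs listed in `commPairs` commute. -/
def ARels : Set (FreeGroup (Fin 8)) :=
  {r | (∃ i : Fin 8, r = .of i * .of i) ∨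
    ∃ p ∈ commPairs, r = .of p.1 * .of p.2 * (.of p.1)⁻¹ * (.of p.2)⁻¹}

/-- The group `A`: the graph product of 8 groups of order two determined by the
graph with edges `commPairs`. -/
abbrev GroupA := PresentedGroup ARels




namespace RACGNF

variable {k : ℕ}

def pullOut (E : Fin k → Fin k → Bool) (x : Fin k) : List (Fin k) → Option (List (Fin k))
  | [] => none
  | y :: t =>
    if y = x then some t
    else if E x y then (pullOut E x t).map (y :: ·) else none

def cancelOnce (E : Fin k → Fin k → Bool) : List (Fin k) → Option (List (Fin k))
  | [] => none
  | x :: w =>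
    match pullOut E x w with
    | some w' => some w'
    | none => (cancelOnce E w).map (x :: ·)

def cancelAll (E : Fin k → Fin k → Bool) : ℕ → List (Fin k) → List (Fin k)
  | 0, w => w
  | n + 1, w =>
    match cancelOnce E w with
    | none => w
    | some w' => cancelAll E n w'

def tryPulls (E : Fin k → Fin k → Bool) : List (Fin k) → List (Fin k) →
    Option (Fin k × List (Fin k))
  | [], _ => none
  | x :: xs, w =>
    match pullOut E x w with
    | some w' => some (x, w')
    | none => tryPulls E xs w

def sortCanon (E : Fin k → Fin k → Bool) : ℕ → List (Fin k) → List (Fin k)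
  | 0, w => w
  | n + 1, w =>
    match tryPulls E (List.finRange k) w with
    | none => w
    | some (x, w') => x :: sortCanon E n w'

def normalizeW (E : Fin k → Fin k → Bool) (w : List (Fin k)) : List (Fin k) :=
  let w' := cancelAll E w.length w
  sortCanon E w'.length w'

section Sound

variable {G : Type*} [Group G] (E : Fin k → Fin k → Bool) (f : Fin k → G)

def evalW (w : List (Fin k)) : G := (w.map f).prod

@[simp] lemma evalW_nil : evalW f ([] : List (Fin k)) = 1 := rfl

@[simp] lemma evalW_cons (x : Fin k) (w : List (Fin k)) :
    evalW f (x :: w) = f x * evalW f w := by simp [evalW]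

lemma evalW_append (u v : List (Fin k)) :
    evalW f (u ++ v) = evalW f u * evalW f v := by simp [evalW]

variable (hsq : ∀ i, f i * f i = 1)
variable (hcomm : ∀ i j, E i j = true → f i * f j = f j * f i)

include hcomm in
lemma pullOut_sound (x : Fin k) :
    ∀ (w w' : List (Fin k)), pullOut E x w = some w' → evalW f w = f x * evalW f w' := by
  intro w
  induction w with
  | nil => intro w' h; simp [pullOut] at h
  | cons y t ih =>
    intro w' h
    by_cases hy : y = x
    · simp [pullOut, hy] at h
      subst hy h; rfl
    · rw [pullOut, if_neg hy] at h
      by_cases hE : E x y = true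
      · rw [if_pos hE] at h
        cases ht : pullOut E x t with
        | none => rw [ht] at h; simp at h
        | some t' =>
          rw [ht] at h
          obtain rfl : y :: t' = w' := by simpa using h
          rw [evalW_cons, evalW_cons, ih t' ht, ← mul_assoc, ← hcomm x y hE, mul_assoc]
      · rw [if_neg hE] at h; simp at h

include hsq hcomm in
lemma cancelOnce_sound :
    ∀ (w w' : List (Fin k)), cancelOnce E w = some w' → evalW f w = evalW f w' := by
  intro w
  induction w with
  | nil => intro w' h; simp [cancelOnce] at h
  | cons x t ih =>
    intro w' h
    rw [cancelOnce] at h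
    cases hp : pullOut E x t with
    | some t' =>
      rw [hp] at h
      obtain rfl : t' = w' := by simpa using h
      rw [evalW_cons, pullOut_sound E f hcomm x t t' hp, ← mul_assoc, hsq, one_mul]
    | none =>
      rw [hp] at h
      cases hc : cancelOnce E t with
      | none => rw [hc] at h; simp at h
      | some t' =>
        rw [hc] at h
        simp only [Option.map_some, Option.some.injEq] at h; subst h
        rw [evalW_cons, evalW_cons, ih t' hc]

include hsq hcomm in
lemma cancelAll_sound : ∀ (n : ℕ) (w : List (Fin k)),
    evalW f (cancelAll E n w) = evalW f w := by
  intro n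
  induction n with
  | zero => intro w; rfl
  | succ n ih =>
    intro w
    rw [cancelAll]
    cases hc : cancelOnce E w with
    | none => rfl
    | some w' => rw [ih w', cancelOnce_sound E f hsq hcomm w w' hc]

include hcomm in
lemma tryPulls_sound : ∀ (l : List (Fin k)) (w : List (Fin k)) (x : Fin k)
    (w' : List (Fin k)), tryPulls E l w = some (x, w') → evalW f w = f x * evalW f w' := by
  intro l
  induction l with
  | nil => intro w x w' h; simp [tryPulls] at h
  | cons y ys ih =>
    intro w x w' h
    rw [tryPulls] at h
    cases hp : pullOut E y w with
    | some t' =>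
      rw [hp] at h
      simp only [Option.some.injEq, Prod.mk.injEq] at h
      obtain ⟨rfl, rfl⟩ := h
      exact pullOut_sound E f hcomm _ _ _ hp
    | none => rw [hp] at h; exact ih w x w' h

include hcomm in
lemma sortCanon_sound : ∀ (n : ℕ) (w : List (Fin k)),
    evalW f (sortCanon E n w) = evalW f w := by
  intro n
  induction n with
  | zero => intro w; rfl
  | succ n ih =>
    intro w
    rw [sortCanon]
    cases ht : tryPulls E (List.finRange k) w with
    | none => rfl
    | some p =>
      obtain ⟨x, w'⟩ := p
      rw [evalW_cons, ih w', tryPulls_sound E f hcomm _ _ _ _ ht]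

include hsq hcomm in
lemma normalizeW_sound (w : List (Fin k)) :
    evalW f (normalizeW E w) = evalW f w := by
  rw [normalizeW]
  rw [sortCanon_sound E f hcomm, cancelAll_sound E f hsq hcomm]

include hsq hcomm in
theorem evalW_eq_of_normEq {w₁ w₂ : List (Fin k)}
    (h : normalizeW E w₁ = normalizeW E w₂) : evalW f w₁ = evalW f w₂ := by
  rw [← normalizeW_sound E f hsq hcomm w₁, ← normalizeW_sound E f hsq hcomm w₂, h]

end Sound

end RACGNF

open RACGNF

/-! ### Data tables -/

def ET : Fin 5 → Fin 5 → Bool := fun i j =>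
  decide ((i : ℕ) + 1 < (j : ℕ)) || decide ((j : ℕ) + 1 < (i : ℕ))

def ECb (i j : Fin 16) : Bool :=
  if hi : (i : ℕ) < 8 then
    if hj : (j : ℕ) < 8 then
      decide (((⟨i, hi⟩ : Fin 8), (⟨j, hj⟩ : Fin 8)) ∈ commPairs ∨
        ((⟨j, hj⟩ : Fin 8), (⟨i, hi⟩ : Fin 8)) ∈ commPairs)
    else false
  else
    if hj : (j : ℕ) < 8 then false
    else
      decide (((⟨(i : ℕ) - 8, by omega⟩ : Fin 8), (⟨(j : ℕ) - 8, by omega⟩ : Fin 8)) ∈ commPairs ∨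
        ((⟨(j : ℕ) - 8, by omega⟩ : Fin 8), (⟨(i : ℕ) - 8, by omega⟩ : Fin 8)) ∈ commPairs)

def wTtab : List (List (Fin 5)) := [[0], [1], [3], [4], [2, 1, 0, 1, 0, 1, 2], [2, 1, 2, 1, 2], [2, 3, 2, 3, 2], [2, 3, 4, 3, 4, 3, 2], [2, 1, 0, 3, 2, 1, 0, 1, 0, 2, 1, 3, 2], [2, 1, 3, 2, 1, 2, 1, 3, 2], [2, 1, 3, 2, 3, 2, 1, 3, 2], [2, 1, 3, 2, 4, 3, 4, 3, 2, 1, 4, 3, 2], [2, 1, 0, 3, 2, 1, 4, 3, 2, 1, 2, 1, 0, 3, 2, 1, 4, 3, 2], [2, 1, 3, 2, 4, 3, 2, 3, 2, 1, 4, 3, 2], [2, 1, 0, 3, 2, 1, 2, 1, 0, 2, 1, 3, 2], [2, 1, 0, 3, 2, 1, 4, 3, 2, 3, 2, 1, 0, 3, 2, 1, 4, 3, 2]]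

def transTab : List (List (Fin 5)) := [[], [2], [1, 2], [3, 2], [0, 1, 2], [1, 3, 2], [4, 3, 2], [0, 1, 3, 2], [1, 4, 3, 2], [2, 1, 3, 2], [0, 1, 4, 3, 2], [0, 2, 1, 3, 2], [2, 1, 4, 3, 2], [0, 2, 1, 4, 3, 2], [1, 0, 2, 1, 3, 2], [3, 2, 1, 4, 3, 2], [0, 3, 2, 1, 4, 3, 2], [1, 0, 2, 1, 4, 3, 2], [1, 0, 3, 2, 1, 4, 3, 2], [2, 1, 0, 3, 2, 1, 4, 3, 2]]

def permTab : List (List (Fin 20)) := [[0, 1, 4, 3, 2, 7, 6, 5, 10, 11, 8, 9, 13, 12, 14, 16, 15, 17, 18, 19], [0, 2, 1, 5, 4, 3, 8, 7, 6, 9, 10, 14, 12, 17, 11, 15, 18, 13, 16, 19], [1, 0, 2, 3, 4, 9, 6, 11, 12, 5, 13, 7, 8, 10, 14, 15, 16, 17, 19, 18], [0, 3, 5, 1, 7, 2, 6, 4, 8, 9, 10, 11, 15, 16, 14, 12, 13, 18, 17, 19], [0, 1, 2, 6, 4, 8, 3, 10, 5, 12, 7, 13, 9, 11, 17, 15, 16,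 14, 18, 19]]

def cocTab : List (List (List (Fin 16))) := [[[0], [0], [], [0], [], [], [0], [], [], [], [], [], [], [], [8], [], [], [8], [8], [8]], [[1], [], [], [], [4], [], [], [4], [], [9], [4], [], [9], [], [], [9], [], [], [], [12]], [[], [], [5], [6], [5], [], [6], [], [], [], [], [], [], [], [14], [13], [13], [14], [], []], [[2], [], [], [], [], [], [7], [], [7], [10], [7], [10], [], [], [10], [], [], [], [], [15]], [[3], [3], [3], [], [3], [], [], [], [], [], [], [], [], [], [], [11], [11], [], [11], [11]]]

def eTab : List (List (Fin 6)) := [[0, 1, 2], [0, 1, 3], [0, 2, 3], [0, 1, 4], [1, 2, 3], [0, 2, 4], [0, 1, 5], [1, 2, 4], [0, 2, 5], [0, 3, 4], [1, 2, 5], [1, 3, 4], [0, 3, 5], [1, 3, 5], [2, 3, 4], [0, 4, 5], [1, 4, 5], [2, 3, 5], [2, 4, 5], [3, 4, 5]]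

def wT (l : Fin 16) : List (Fin 5) := wTtab.getD l.val []
def transW (C : Fin 20) : List (Fin 5) := transTab.getD C.val []
def permT (i : Fin 5) (C : Fin 20) : Fin 20 := (permTab.getD i.val []).getD C.val 0
def cocT (i : Fin 5) (C : Fin 20) : List (Fin 16) := (cocTab.getD i.val []).getD C.val []
def eB (C : Fin 20) (v : Fin 6) : Bool := (eTab.getD C.val []).contains v

/-! ### Generators and relations -/

lemma mk_rel {α : Type*} {rels : Set (FreeGroup α)} {r : FreeGroup α} (h : r ∈ rels) :
    PresentedGroup.mk rels r = 1 :=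
  (QuotientGroup.eq_one_iff r).mpr (Subgroup.subset_normalClosure h)

def fT : Fin 5 → TwinGroup 5 := PresentedGroup.of

lemma sqT : ∀ i, fT i * fT i = 1 := by
  intro i
  have h : PresentedGroup.mk (twinRels 5) (.of i * .of i) = 1 := mk_rel (Or.inl ⟨i, rfl⟩)
  simpa [fT, PresentedGroup.of, map_mul] using h

lemma commT : ∀ i j : Fin 5, ET i j = true → fT i * fT j = fT j * fT i := by
  have key : ∀ a b : Fin 5, (a : ℕ) + 1 < (b : ℕ) → fT a * fT b = fT b * fT a := by
    intro a b hab
    have h1 : PresentedGroup.mk (twinRels 5) (.of a * .of b * (.of a)⁻¹ * (.of b)⁻¹) = 1 :=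
      mk_rel (Or.inr ⟨a, b, hab, rfl⟩)
    have h2 : fT a * fT b * (fT a)⁻¹ * (fT b)⁻¹ = 1 := by
      simpa [fT, PresentedGroup.of, map_mul] using h1
    calc fT a * fT b = (fT a * fT b * (fT a)⁻¹ * (fT b)⁻¹) * (fT b * fT a) := by group
    _ = fT b * fT a := by rw [h2]; group
  intro i j hij
  simp only [ET, Bool.or_eq_true, decide_eq_true_eq] at hij
  rcases hij with h | h
  · exact key i j h
  · exact (key j i h).symm

def fA : Fin 8 → GroupA := PresentedGroup.of

lemma sqA : ∀ i, fA i * fA i = 1 := by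
  intro i
  have h : PresentedGroup.mk ARels (.of i * .of i) = 1 := mk_rel (Or.inl ⟨i, rfl⟩)
  simpa [fA, PresentedGroup.of, map_mul] using h

lemma commA : ∀ p : Fin 8 × Fin 8, p ∈ commPairs → fA p.1 * fA p.2 = fA p.2 * fA p.1 := by
  intro p hp
  have h1 : PresentedGroup.mk ARels (.of p.1 * .of p.2 * (.of p.1)⁻¹ * (.of p.2)⁻¹) = 1 :=
    mk_rel (Or.inr ⟨p, hp, rfl⟩)
  have h2 : fA p.1 * fA p.2 * (fA p.1)⁻¹ * (fA p.2)⁻¹ = 1 := by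
    simpa [fA, PresentedGroup.of, map_mul] using h1
  calc fA p.1 * fA p.2 = (fA p.1 * fA p.2 * (fA p.1)⁻¹ * (fA p.2)⁻¹) * (fA p.2 * fA p.1) := by group
  _ = fA p.2 * fA p.1 := by rw [h2]; group

abbrev CC := Monoid.Coprod GroupA GroupA

def fC : Fin 16 → CC := fun l =>
  if h : (l : ℕ) < 8 then Monoid.Coprod.inl (fA ⟨l, h⟩)
  else Monoid.Coprod.inr (fA ⟨(l : ℕ) - 8, by omega⟩)

lemma sqC : ∀ l, fC l * fC l = 1 := by
  intro l
  unfold fC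
  split_ifs with h
  · rw [← map_mul, sqA, map_one]
  · rw [← map_mul, sqA, map_one]

lemma commC : ∀ i j, ECb i j = true → fC i * fC j = fC j * fC i := by
  intro i j hij
  unfold ECb at hij
  unfold fC
  by_cases hi : (i : ℕ) < 8 <;> by_cases hj : (j : ℕ) < 8
  · rw [dif_pos hi, dif_pos hj] at hij ⊢
    rw [decide_eq_true_eq] at hij
    rw [← map_mul, ← map_mul]
    refine congrArg _ ?_
    rcases hij with h | h
    · exact commA _ h
    · exact (commA _ h).symm
  · rw [dif_pos hi, dif_neg hj] at hij; simp at hij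
  · rw [dif_neg hi, dif_pos hj] at hij; simp at hij
  · rw [dif_neg hi, dif_neg hj] at hij ⊢
    rw [decide_eq_true_eq] at hij
    rw [← map_mul, ← map_mul]
    refine congrArg _ ?_
    rcases hij with h | h
    · exact commA _ h
    · exact (commA _ h).symm

lemma normT_eq {w₁ w₂ : List (Fin 5)} (h : normalizeW ET w₁ = normalizeW ET w₂) :
    evalW fT w₁ = evalW fT w₂ := evalW_eq_of_normEq ET fT sqT commT h

lemma normC_eq {w₁ w₂ : List (Fin 16)} (h : normalizeW ECb w₁ = normalizeW ECb w₂) :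
    evalW fC w₁ = evalW fC w₂ := evalW_eq_of_normEq ECb fC sqC commC h

/-! ### The homomorphism `φ : A * A → B̄₆` -/

def lft (j : Fin 8) : Fin 16 := ⟨j, by omega⟩
def rgt (j : Fin 8) : Fin 16 := ⟨(j : ℕ) + 8, by omega⟩

lemma liftA_rels (s : Fin 8 → Fin 16)
    (h1 : ∀ i : Fin 8, normalizeW ET (wT (s i) ++ wT (s i)) = [])
    (h2 : ∀ p : Fin 8 × Fin 8, p ∈ commPairs →
      normalizeW ET (wT (s p.1) ++ wT (s p.2)) = normalizeW ET (wT (s p.2) ++ wT (s p.1))) :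
    ∀ r ∈ ARels, FreeGroup.lift (fun j => evalW fT (wT (s j))) r = 1 := by
  rintro r (⟨i, rfl⟩ | ⟨p, hp, rfl⟩)
  · simp only [map_mul, FreeGroup.lift_apply_of]
    rw [← evalW_append]
    have : evalW fT (wT (s i) ++ wT (s i)) = evalW fT ([] : List (Fin 5)) := normT_eq (h1 i)
    simpa using this
  · simp only [map_mul, map_inv, FreeGroup.lift_apply_of]
    have hc : evalW fT (wT (s p.1)) * evalW fT (wT (s p.2)) =
        evalW fT (wT (s p.2)) * evalW fT (wT (s p.1)) := by
      rw [← evalW_append, ← evalW_append]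
      exact normT_eq (h2 p hp)
    rw [hc]; group

def φA1 : GroupA →* TwinGroup 5 :=
  PresentedGroup.toGroup (liftA_rels lft (by decide) (by decide))

def φA2 : GroupA →* TwinGroup 5 :=
  PresentedGroup.toGroup (liftA_rels rgt (by decide) (by decide))

def φh : CC →* TwinGroup 5 := Monoid.Coprod.lift φA1 φA2

lemma inl_fC (j : Fin 8) : Monoid.Coprod.inl (PresentedGroup.of (rels := ARels) j) = fC (lft j) := by
  unfold fC
  rw [dif_pos (show ((lft j : ℕ)) < 8 from j.isLt)]
  rfl

lemma inr_fC (j : Fin 8) : Monoid.Coprod.inr (PresentedGroup.of (rels := ARels) j) = fC (rgt j) := by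
  unfold fC
  rw [dif_neg (show ¬((rgt j : ℕ)) < 8 by show ¬(j : ℕ) + 8 < 8; omega)]
  rfl

lemma φ_fC : ∀ l : Fin 16, φh (fC l) = evalW fT (wT l) := by
  intro l
  unfold fC
  split_ifs with h
  · rw [show φh (Monoid.Coprod.inl (fA ⟨l, h⟩)) = φA1 (fA ⟨l, h⟩) from
      Monoid.Coprod.lift_apply_inl φA1 φA2 _]
    rw [show φA1 (fA ⟨l, h⟩) = evalW fT (wT (lft ⟨l, h⟩)) from PresentedGroup.toGroup.of _]
    congr 1
  · rw [show φh (Monoid.Coprod.inr (fA ⟨(l : ℕ) - 8, by omega⟩)) =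
        φA2 (fA ⟨(l : ℕ) - 8, by omega⟩) from Monoid.Coprod.lift_apply_inr φA1 φA2 _]
    rw [show φA2 (fA ⟨(l : ℕ) - 8, by omega⟩) = evalW fT (wT (rgt ⟨(l : ℕ) - 8, by omega⟩)) from
      PresentedGroup.toGroup.of _]
    exact congrArg (fun x => evalW fT (wT x)) (Fin.ext (by show (l : ℕ) - 8 + 8 = (l : ℕ); omega))

lemma φ_evalC : ∀ w : List (Fin 16), φh (evalW fC w) = evalW fT (w.flatMap wT) := by
  intro w
  induction w with
  | nil => simp
  | cons x t ih =>
    rw [evalW_cons, map_mul, φ_fC, ih, List.flatMap_cons, evalW_append]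

/-! ### The monomial representation `Ψ` -/

def permAut : Equiv.Perm (Fin 20) →* MulAut (Fin 20 → CC) where
  toFun p :=
    { toFun := fun f C => f (p.symm C)
      invFun := fun f C => f (p C)
      left_inv := fun f => funext fun C => congrArg f (p.symm_apply_apply C)
      right_inv := fun f => funext fun C => congrArg f (p.apply_symm_apply C)
      map_mul' := fun _ _ => rfl }
  map_one' := rfl
  map_mul' := fun _ _ => rfl

abbrev G0 := SemidirectProduct (Fin 20 → CC) (Equiv.Perm (Fin 20)) permAut

lemma permT_invol : ∀ (i : Fin 5) (C : Fin 20), permT i (permT i C) = C := by decide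

def permEq (i : Fin 5) : Equiv.Perm (Fin 20) :=
  ⟨permT i, permT i, fun C => permT_invol i C, fun C => permT_invol i C⟩

def ΨF (i : Fin 5) : G0 := ⟨fun C => evalW fC (cocT i C), permEq i⟩

lemma d3 : ∀ (i : Fin 5) (C : Fin 20),
    normalizeW ECb (cocT i C ++ cocT i (permT i C)) = [] := by decide

lemma d4 : ∀ i j : Fin 5, (i : ℕ) + 1 < (j : ℕ) → ∀ C : Fin 20,
    normalizeW ECb (cocT i C ++ cocT j (permT i C)) =
      normalizeW ECb (cocT j C ++ cocT i (permT j C)) := by decide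

lemma d5 : ∀ i j : Fin 5, (i : ℕ) + 1 < (j : ℕ) → ∀ C : Fin 20,
    permT i (permT j C) = permT j (permT i C) := by decide

lemma hΨ : ∀ r ∈ twinRels 5, FreeGroup.lift ΨF r = 1 := by
  rintro r (⟨i, rfl⟩ | ⟨i, j, hij, rfl⟩)
  · simp only [map_mul, FreeGroup.lift_apply_of]
    refine SemidirectProduct.ext ?_ ?_
    · funext C
      show evalW fC (cocT i C) * evalW fC (cocT i (permT i C)) = 1
      rw [← evalW_append]
      have : evalW fC (cocT i C ++ cocT i (permT i C)) = evalW fC ([] : List (Fin 16)) :=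
        normC_eq (by rw [d3]; rfl)
      simpa using this
    · exact Equiv.ext fun C => permT_invol i C
  · simp only [map_mul, map_inv, FreeGroup.lift_apply_of]
    have hcm : ΨF i * ΨF j = ΨF j * ΨF i := by
      refine SemidirectProduct.ext ?_ ?_
      · funext C
        show evalW fC (cocT i C) * evalW fC (cocT j (permT i C)) =
          evalW fC (cocT j C) * evalW fC (cocT i (permT j C))
        rw [← evalW_append, ← evalW_append]
        exact normC_eq (d4 i j hij C)
      · exact Equiv.ext fun C => d5 i j hij C
    rw [hcm]; group

def Ψh : TwinGroup 5 →* G0 := PresentedGroup.toGroup hΨ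

lemma Ψ_of (i : Fin 5) : Ψh (fT i) = ΨF i := PresentedGroup.toGroup.of hΨ

/-! ### Compatibility of `Ψ` with the permutation action on cosets -/

open Pointwise

abbrev Hsub : Subgroup (TwinGroup 5) :=
  Subgroup.comap (twinPerm 5)
    (MulAction.stabilizer (Equiv.Perm (Fin 6)) ({0, 1, 2} : Set (Fin 6)))

def Sgrp : Subgroup (Equiv.Perm (Fin 6) × Equiv.Perm (Fin 20)) where
  carrier := {x | ∀ C v, eB (x.2 C) v = eB C (x.1⁻¹ v)}
  one_mem' := by intro C v; rfl
  mul_mem' := by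
    intro a b ha hb C v
    show eB ((a.2 * b.2) C) v = eB C ((a.1 * b.1)⁻¹ v)
    rw [Equiv.Perm.mul_apply, ha (b.2 C) v, hb C (a.1⁻¹ v), mul_inv_rev,
      Equiv.Perm.mul_apply]
  inv_mem' := by
    intro a ha C v
    show eB (a.2⁻¹ C) v = eB C (a.1⁻¹⁻¹ v)
    rw [inv_inv]
    have h := ha (a.2⁻¹ C) (a.1 v)
    simp only [← Equiv.Perm.mul_apply, mul_inv_cancel, inv_mul_cancel, Equiv.Perm.one_apply] at h
    exact h.symm

def Θh : TwinGroup 5 →* Equiv.Perm (Fin 6) × Equiv.Perm (Fin 20) :=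
  (twinPerm 5).prod (SemidirectProduct.rightHom.comp Ψh)

lemma d8 : ∀ (j : Fin 5) (C : Fin 20) (v : Fin 6),
    eB (permT j C) v = eB C (Equiv.swap j.castSucc j.succ v) := by decide

lemma theta_mem : ∀ t, Θh t ∈ Sgrp := by
  intro t
  refine PresentedGroup.generated_by _ (Sgrp.comap Θh) ?_ t
  intro j
  show Θh (PresentedGroup.of j) ∈ Sgrp
  have h1 : twinPerm 5 (PresentedGroup.of j) = Equiv.swap j.castSucc j.succ :=
    PresentedGroup.toGroup.of _
  have h2 : SemidirectProduct.rightHom (Ψh (PresentedGroup.of j)) = permEq j := by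
    rw [show Ψh (PresentedGroup.of j) = ΨF j from PresentedGroup.toGroup.of hΨ]
    rfl
  show ∀ C v, eB ((Θh (PresentedGroup.of j)).2 C) v = eB C ((Θh (PresentedGroup.of j)).1⁻¹ v)
  intro C v
  show eB (SemidirectProduct.rightHom (Ψh (PresentedGroup.of j)) C) v =
    eB C ((twinPerm 5 (PresentedGroup.of j))⁻¹ v)
  rw [h1, h2, Equiv.swap_inv]
  exact d8 j C v

lemma eB_iff : ∀ v : Fin 6, v ∈ ({0, 1, 2} : Set (Fin 6)) ↔ eB 0 v = true := by
  intro v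
  simp only [Set.mem_insert_iff, Set.mem_singleton_iff]
  revert v; decide

lemma e_inj0 : ∀ C : Fin 20, (∀ v, eB C v = eB 0 v) → C = 0 := by decide

lemma fix_iff_mem (t : TwinGroup 5) :
    t ∈ Hsub ↔ SemidirectProduct.rightHom (Ψh t) 0 = 0 := by
  have hS : ∀ C v, eB (SemidirectProduct.rightHom (Ψh t) C) v
      = eB C ((twinPerm 5 t)⁻¹ v) := theta_mem t
  constructor
  · intro ht
    have hst : twinPerm 5 t • ({0, 1, 2} : Set (Fin 6)) = {0, 1, 2} :=
      MulAction.mem_stabilizer_iff.mp ht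
    apply e_inj0
    intro v
    rw [hS 0 v]
    have hv : (twinPerm 5 t)⁻¹ v ∈ ({0, 1, 2} : Set (Fin 6)) ↔
        v ∈ ({0, 1, 2} : Set (Fin 6)) := by
      conv_rhs => rw [← hst]
      exact (Set.mem_smul_set_iff_inv_smul_mem (a := twinPerm 5 t) (A := ({0, 1, 2} : Set (Fin 6))) (x := v)).symm
    have h' : (eB 0 ((twinPerm 5 t)⁻¹ v) = true) ↔ (eB 0 v = true) :=
      ((eB_iff _).symm.trans hv).trans (eB_iff v)
    exact Bool.eq_iff_iff.mpr (by simpa using h')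
  · intro hfix
    show twinPerm 5 t ∈ MulAction.stabilizer _ _
    rw [MulAction.mem_stabilizer_iff]
    ext v
    rw [Set.mem_smul_set_iff_inv_smul_mem]
    show (twinPerm 5 t)⁻¹ v ∈ _ ↔ _
    rw [eB_iff, eB_iff, ← hS 0 v, hfix]

/-! ### The homomorphism `ψ : H → A * A` -/

def ψh : Hsub →* CC where
  toFun h := (Ψh h.1).left 0
  map_one' := by
    show (Ψh 1).left 0 = 1
    rw [map_one]
    rfl
  map_mul' := by
    intro a b
    show (Ψh ((a : TwinGroup 5) * (b : TwinGroup 5))).left 0 =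
      (Ψh (a : TwinGroup 5)).left 0 * (Ψh (b : TwinGroup 5)).left 0
    rw [map_mul, SemidirectProduct.mul_left]
    have hfix : SemidirectProduct.rightHom (Ψh (a : TwinGroup 5)) 0 = 0 :=
      (fix_iff_mem _).mp a.2
    have h2 : ((Ψh (a : TwinGroup 5)).right).symm 0 = 0 := by
      rw [Equiv.symm_apply_eq]
      exact hfix.symm
    show (Ψh (a : TwinGroup 5)).left 0 *
      (Ψh (b : TwinGroup 5)).left (((Ψh (a : TwinGroup 5)).right).symm 0) = _
    rw [h2]

def pApp : List (Fin 5) → Fin 20 → Fin 20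
  | [], C => C
  | i :: u, C => permT i (pApp u C)

def cocL : List (Fin 5) → Fin 20 → List (Fin 16)
  | [], _ => []
  | i :: u, C => cocT i C ++ cocL u (permT i C)

lemma ΨT_right : ∀ (u : List (Fin 5)) (C : Fin 20),
    (Ψh (evalW fT u)).right C = pApp u C := by
  intro u
  induction u with
  | nil =>
    intro C
    rw [evalW_nil, map_one]
    rfl
  | cons i t ih =>
    intro C
    rw [evalW_cons, map_mul, Ψ_of, SemidirectProduct.mul_right]
    show permEq i ((Ψh (evalW fT t)).right C) = _
    rw [ih]
    rfl

lemma ΨT_left : ∀ (u : List (Fin 5)) (C : Fin 20),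
    (Ψh (evalW fT u)).left C = evalW fC (cocL u C) := by
  intro u
  induction u with
  | nil =>
    intro C
    rw [evalW_nil, map_one]
    rfl
  | cons i t ih =>
    intro C
    rw [evalW_cons, map_mul, Ψ_of, SemidirectProduct.mul_left]
    show evalW fC (cocT i C) * (Ψh (evalW fT t)).left ((permEq i).symm C) = _
    show evalW fC (cocT i C) * (Ψh (evalW fT t)).left (permT i C) = _
    rw [ih, ← evalW_append]
    rfl

/-! ### Every element of the twin group is a word in the generators -/

lemma invT (i : Fin 5) : (fT i)⁻¹ = fT i := inv_eq_of_mul_eq_one_right (sqT i)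

lemma evalT_reverse : ∀ u : List (Fin 5), evalW fT u.reverse = (evalW fT u)⁻¹ := by
  intro u
  induction u with
  | nil => simp
  | cons i t ih =>
    rw [List.reverse_cons, evalW_append, ih, evalW_cons, evalW_cons, evalW_nil,
      mul_one, mul_inv_rev, invT]

def wordSub : Subgroup (TwinGroup 5) where
  carrier := {t | ∃ u, t = evalW fT u}
  one_mem' := ⟨[], rfl⟩
  mul_mem' := by
    rintro a b ⟨u, rfl⟩ ⟨v, rfl⟩
    exact ⟨u ++ v, (evalW_append fT u v).symm⟩
  inv_mem' := by
    rintro a ⟨u, rfl⟩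
    exact ⟨u.reverse, (evalT_reverse u).symm⟩

lemma exists_word (t : TwinGroup 5) : ∃ u, t = evalW fT u :=
  PresentedGroup.generated_by _ wordSub
    (fun j => ⟨[j], by rw [evalW_cons, evalW_nil, mul_one]; rfl⟩) t

/-! ### The master (Reidemeister–Schreier) identity -/

lemma d7 : ∀ (i : Fin 5) (D : Fin 20),
    normalizeW ET (i :: transW D) =
      normalizeW ET (transW (permT i D) ++ (cocT i (permT i D)).flatMap wT) := by decide

lemma bsch (i : Fin 5) (D : Fin 20) :
    fT i * evalW fT (transW D) =
      evalW fT (transW (permT i D)) * φh (evalW fC (cocT i (permT i D))) := by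
  rw [φ_evalC, ← evalW_cons, ← evalW_append]
  exact normT_eq (d7 i D)

lemma master : ∀ (u : List (Fin 5)) (C : Fin 20),
    evalW fT u * evalW fT (transW C) =
      evalW fT (transW (pApp u C)) * φh (evalW fC (cocL u (pApp u C))) := by
  intro u
  induction u with
  | nil =>
    intro C
    show 1 * evalW fT (transW C) = evalW fT (transW C) * φh (evalW fC [])
    rw [evalW_nil, map_one, one_mul, mul_one]
  | cons i t ih =>
    intro C
    have hZ : permT i (pApp (i :: t) C) = pApp t C := by
      show permT i (permT i (pApp t C)) = pApp t C
      exact permT_invol _ _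
    calc evalW fT (i :: t) * evalW fT (transW C)
        = fT i * (evalW fT t * evalW fT (transW C)) := by rw [evalW_cons, mul_assoc]
      _ = fT i * (evalW fT (transW (pApp t C)) * φh (evalW fC (cocL t (pApp t C)))) := by
          rw [ih]
      _ = (fT i * evalW fT (transW (pApp t C))) * φh (evalW fC (cocL t (pApp t C))) := by
          rw [mul_assoc]
      _ = (evalW fT (transW (permT i (pApp t C))) *
            φh (evalW fC (cocT i (permT i (pApp t C))))) *
            φh (evalW fC (cocL t (pApp t C))) := by rw [bsch]
      _ = evalW fT (transW (pApp (i :: t) C)) *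
            φh (evalW fC (cocT i (pApp (i :: t) C) ++ cocL t (permT i (pApp (i :: t) C)))) := by
          rw [evalW_append, map_mul, hZ, mul_assoc]; rfl
      _ = evalW fT (transW (pApp (i :: t) C)) *
            φh (evalW fC (cocL (i :: t) (pApp (i :: t) C))) := rfl

/-! ### `φ` lands in the bicoloured subgroup -/

lemma d10 : ∀ l : Fin 16, pApp (wT l) 0 = 0 := by decide

lemma φ_mem : ∀ c : CC, φh c ∈ Hsub := by
  have base : ∀ l : Fin 16, φh (fC l) ∈ Hsub := by
    intro l
    apply (fix_iff_mem _).mpr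
    rw [φ_fC]
    show (Ψh (evalW fT (wT l))).right 0 = 0
    rw [ΨT_right]
    exact d10 l
  intro c
  refine Monoid.Coprod.induction_on c ?_ ?_ ?_
  · intro m
    refine PresentedGroup.generated_by _ (Hsub.comap (φh.comp Monoid.Coprod.inl)) ?_ m
    intro j
    show φh (Monoid.Coprod.inl (PresentedGroup.of j)) ∈ Hsub
    rw [inl_fC]
    exact base _
  · intro n
    refine PresentedGroup.generated_by _ (Hsub.comap (φh.comp Monoid.Coprod.inr)) ?_ n
    intro j
    show φh (Monoid.Coprod.inr (PresentedGroup.of j)) ∈ Hsub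
    rw [inr_fC]
    exact base _
  · intro x y hx hy
    rw [map_mul]
    exact mul_mem hx hy

def φ' : CC →* Hsub := φh.codRestrict Hsub φ_mem

/-! ### The two compositions are the identity -/

lemma d6 : ∀ l : Fin 16,
    normalizeW ECb (cocL (wT l) 0) = normalizeW ECb [l] := by decide

lemma hψφ : ψh.comp φ' = MonoidHom.id CC := by
  refine Monoid.Coprod.hom_ext ?_ ?_
  · refine PresentedGroup.ext fun j => ?_
    show ψh (φ' (Monoid.Coprod.inl (PresentedGroup.of j))) = Monoid.Coprod.inl (PresentedGroup.of j)
    rw [inl_fC]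
    show (Ψh (φh (fC (lft j)))).left 0 = fC (lft j)
    rw [φ_fC, ΨT_left, normC_eq (d6 (lft j)), evalW_cons, evalW_nil, mul_one]
  · refine PresentedGroup.ext fun j => ?_
    show ψh (φ' (Monoid.Coprod.inr (PresentedGroup.of j))) = Monoid.Coprod.inr (PresentedGroup.of j)
    rw [inr_fC]
    show (Ψh (φh (fC (rgt j)))).left 0 = fC (rgt j)
    rw [φ_fC, ΨT_left, normC_eq (d6 (rgt j)), evalW_cons, evalW_nil, mul_one]

lemma hφψ : φ'.comp ψh = MonoidHom.id Hsub := by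
  refine MonoidHom.ext fun h => Subtype.ext ?_
  show φh (ψh h) = (h : TwinGroup 5)
  obtain ⟨u, hu⟩ := exists_word (h : TwinGroup 5)
  have hfix : (Ψh (h : TwinGroup 5)).right 0 = 0 := (fix_iff_mem _).mp h.2
  have hp0 : pApp u 0 = 0 := by
    rw [← ΨT_right u 0, ← hu]
    exact hfix
  have hψv : ψh h = evalW fC (cocL u 0) := by
    show (Ψh (h : TwinGroup 5)).left 0 = _
    rw [hu, ΨT_left]
  rw [hψv]
  have hm := master u 0
  rw [hp0] at hm
  have ht0 : transW (0 : Fin 20) = [] := rfl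
  rw [ht0, evalW_nil, mul_one, one_mul] at hm
  rw [← hm, ← hu]

open Pointwise in
/-- **Proposition 4.** The subgroup `H ≤ B̄₆` of bicoloured braids — those whose underlying
permutation maps the set `{1, 2, 3}` (here `{0, 1, 2} ⊆ Fin 6`) to itself — is isomorphic
to the free product `A * A` of two copies of the group `A`. -/
theorem bicoloured_iso_coprod :
    Nonempty ((Subgroup.comap (twinPerm 5)
        (MulAction.stabilizer (Equiv.Perm (Fin 6)) ({0, 1, 2} : Set (Fin 6)))) ≃*
      Monoid.Coprod GroupA GroupA) := by
  exact ⟨MonoidHom.toMulEquiv ψh φ' hφψ hψφ⟩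
end

section
/- Let \(f' : G' \to S\) and \(f'' : G'' \to S\) be surjective group homomorphisms with kernels \(K'\) and \(K''\) respectively. Then the kernel of the induced homomorphism \(f' * f'' : G' * G'' \to S\) (which restricts to \(f'\) on \(G'\) and to \(f''\) on \(G''\)) is isomorphic to the free product \(K' * K'' * F(S \setminus \{e\})\), where \(F(S \setminus \{e\})\) is the free group on the set of non-identity elements of \(S\). -/
open Monoid

namespace KerCoprodAux

/-- Right-translation action of `S` on functions `S → T`. -/
def act (T : Type) [Group T] (S : Type) [Group S] : S →* MulAut (S → T) where
  toFun s :=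
    { toFun := fun a u => a (u * s)
      invFun := fun a u => a (u * s⁻¹)
      left_inv := fun a => funext fun u => by simp
      right_inv := fun a => funext fun u => by simp
      map_mul' := fun a b => rfl }
  map_one' := by ext a u; simp
  map_mul' s t := by ext a u; simp [mul_assoc]

variable {G S : Type} [Group G] [Group S]

open scoped Classical in
noncomputable def sec (f : G →* S) (hf : Function.Surjective f) (s : S) : G :=
  if s = 1 then 1 else Function.surjInv hf s

lemma sec_spec (f : G →* S) (hf : Function.Surjective f) (s : S) : f (sec f hf s) = s := by
  by_cases h : s = 1 <;> simp [sec, h, Function.surjInv_eq hf]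

lemma sec_one (f : G →* S) (hf : Function.Surjective f) : sec f hf 1 = 1 := by simp [sec]

/-- Schreier rewriting element. -/
noncomputable def kel (f : G →* S) (hf : Function.Surjective f) (s : S) (g : G) :
    MonoidHom.ker f :=
  ⟨sec f hf s * g * (sec f hf (s * f g))⁻¹, by
    simp [MonoidHom.mem_ker, sec_spec, mul_assoc]⟩

lemma kel_coe (f : G →* S) (hf : Function.Surjective f) (s : S) (g : G) :
    (kel f hf s g : G) = sec f hf s * g * (sec f hf (s * f g))⁻¹ := rfl

lemma kel_one (f : G →* S) (hf : Function.Surjective f) (s : S) : kel f hf s 1 = 1 := by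
  ext; simp [kel_coe]

lemma kel_mul (f : G →* S) (hf : Function.Surjective f) (s : S) (g₁ g₂ : G) :
    kel f hf s (g₁ * g₂) = kel f hf s g₁ * kel f hf (s * f g₁) g₂ := by
  ext
  simp only [kel_coe, Subgroup.coe_mul, map_mul, mul_assoc]
  group

lemma kel_of_ker (f : G →* S) (hf : Function.Surjective f) (g : G) (hg : f g = 1) :
    kel f hf 1 g = ⟨g, hg⟩ := by
  ext; simp [kel_coe, hg, sec_one]

lemma kel_sec (f : G →* S) (hf : Function.Surjective f) (s : S) :
    kel f hf 1 (sec f hf s) = 1 := by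
  ext; simp [kel_coe, sec_spec, sec_one]

end KerCoprodAux
namespace KerCoprodAux

variable {G' G'' S : Type} [Group G'] [Group G''] [Group S]
variable (f' : G' →* S) (f'' : G'' →* S)

/-- The target group `K' * (K'' * F(S \ {1}))`. -/
abbrev Tgt : Type :=
  Monoid.Coprod (MonoidHom.ker f')
    (Monoid.Coprod (MonoidHom.ker f'') (FreeGroup {s : S // s ≠ 1}))

open scoped Classical in
noncomputable def xbar (s : S) : Tgt f' f'' :=
  if h : s = 1 then 1 else Monoid.Coprod.inr (Monoid.Coprod.inr (FreeGroup.of ⟨s, h⟩))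

lemma xbar_one : xbar f' f'' 1 = 1 := by simp [xbar]

variable (hf' : Function.Surjective f') (hf'' : Function.Surjective f'')

/-- The wreath-product component homomorphism on `G'`. -/
noncomputable def Phi1 : G' →* (S → Tgt f' f'') ⋊[act (Tgt f' f'') S] S where
  toFun g := ⟨fun u => (xbar f' f'' u)⁻¹ * Monoid.Coprod.inl (kel f' hf' u g) *
      xbar f' f'' (u * f' g), f' g⟩
  map_one' := by
    apply SemidirectProduct.ext
    · funext u; simp [kel_one]
    · simp
  map_mul' g₁ g₂ := by
    apply SemidirectProduct.ext
    · funext u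
      rw [SemidirectProduct.mul_left]
      simp only [SemidirectProduct.mul_left, Pi.mul_apply, act, MonoidHom.coe_mk, OneHom.coe_mk,
        MulEquiv.coe_mk, Equiv.coe_fn_mk, map_mul, kel_mul, mul_assoc]
      group
    · simp [map_mul]

/-- The wreath-product component homomorphism on `G''`. -/
noncomputable def Phi2 : G'' →* (S → Tgt f' f'') ⋊[act (Tgt f' f'') S] S where
  toFun g := ⟨fun u => Monoid.Coprod.inr (Monoid.Coprod.inl (kel f'' hf'' u g)), f'' g⟩
  map_one' := by
    apply SemidirectProduct.ext
    · funext u; simp [kel_one]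
    · simp
  map_mul' g₁ g₂ := by
    apply SemidirectProduct.ext
    · funext u
      rw [SemidirectProduct.mul_left]
      simp only [SemidirectProduct.mul_left, Pi.mul_apply, act, MonoidHom.coe_mk, OneHom.coe_mk,
        MulEquiv.coe_mk, Equiv.coe_fn_mk, map_mul, kel_mul, mul_assoc]
    · simp [map_mul]

noncomputable def Phi : Monoid.Coprod G' G'' →* (S → Tgt f' f'') ⋊[act (Tgt f' f'') S] S :=
  Monoid.Coprod.lift (Phi1 f' f'' hf') (Phi2 f' f'' hf'')

lemma Phi_right (h : Monoid.Coprod G' G'') :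
    (Phi f' f'' hf' hf'' h).right = Monoid.Coprod.lift f' f'' h := by
  induction h using Monoid.Coprod.induction_on with
  | inl g => simp [Phi, Phi1]
  | inr g => simp [Phi, Phi2]
  | mul x y hx hy => simp [map_mul, SemidirectProduct.mul_right, hx, hy]

/-- The map backwards, from the target group into the coproduct. -/
noncomputable def psi : Tgt f' f'' →* Monoid.Coprod G' G'' :=
  Monoid.Coprod.lift (Monoid.Coprod.inl.comp (MonoidHom.ker f').subtype)
    (Monoid.Coprod.lift (Monoid.Coprod.inr.comp (MonoidHom.ker f'').subtype)
      (FreeGroup.lift fun s =>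
        Monoid.Coprod.inl (sec f' hf' s.1) * (Monoid.Coprod.inr (sec f'' hf'' s.1))⁻¹))

lemma psi_xbar (s : S) :
    psi f' f'' hf' hf'' (xbar f' f'' s) =
      Monoid.Coprod.inl (sec f' hf' s) * (Monoid.Coprod.inr (sec f'' hf'' s))⁻¹ := by
  by_cases h : s = 1
  · subst h; simp [xbar_one, sec_one]
  · simp [xbar, h, psi]

end KerCoprodAux
namespace KerCoprodAux

variable {G' G'' S : Type} [Group G'] [Group G''] [Group S]
variable (f' : G' →* S) (f'' : G'' →* S)
variable (hf' : Function.Surjective f') (hf'' : Function.Surjective f'')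

lemma psi_inl (k : MonoidHom.ker f') :
    psi f' f'' hf' hf'' (Monoid.Coprod.inl k) = Monoid.Coprod.inl (k : G') := by
  simp [psi]

lemma psi_inr_inl (k : MonoidHom.ker f'') :
    psi f' f'' hf' hf'' (Monoid.Coprod.inr (Monoid.Coprod.inl k)) =
      Monoid.Coprod.inr (k : G'') := by
  simp [psi]

lemma psi_gen (s : S) (hs : s ≠ 1) :
    psi f' f'' hf' hf''
        (Monoid.Coprod.inr (Monoid.Coprod.inr (FreeGroup.of (⟨s, hs⟩ : {s : S // s ≠ 1})))) =
      Monoid.Coprod.inl (sec f' hf' s) * (Monoid.Coprod.inr (sec f'' hf'' s))⁻¹ := by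
  simp [psi]

lemma key (h : Monoid.Coprod G' G'') : ∀ u : S,
    psi f' f'' hf' hf'' ((Phi f' f'' hf' hf'' h).left u) =
      Monoid.Coprod.inr (sec f'' hf'' u) * h *
        (Monoid.Coprod.inr (sec f'' hf'' (u * Monoid.Coprod.lift f' f'' h)))⁻¹ := by
  induction h using Monoid.Coprod.induction_on with
  | inl g =>
    intro u
    rw [Phi, Monoid.Coprod.lift_apply_inl, Monoid.Coprod.lift_apply_inl]
    show psi f' f'' hf' hf''
        ((xbar f' f'' u)⁻¹ * Monoid.Coprod.inl (kel f' hf' u g) * xbar f' f'' (u * f' g)) = _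
    rw [map_mul, map_mul, map_inv, psi_xbar, psi_xbar, psi_inl, kel_coe]
    simp only [map_mul, map_inv]
    group
  | inr g =>
    intro u
    rw [Phi, Monoid.Coprod.lift_apply_inr, Monoid.Coprod.lift_apply_inr]
    show psi f' f'' hf' hf''
        (Monoid.Coprod.inr (Monoid.Coprod.inl (kel f'' hf'' u g))) = _
    rw [psi_inr_inl, kel_coe]
    simp only [map_mul, map_inv]
  | mul x y hx hy =>
    intro u
    rw [map_mul, SemidirectProduct.mul_left, Pi.mul_apply, map_mul, hx]
    have : (act (Tgt f' f'') S (Phi f' f'' hf' hf'' x).right)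
        ((Phi f' f'' hf' hf'' y).left) u = (Phi f' f'' hf' hf'' y).left
          (u * Monoid.Coprod.lift f' f'' x) := by
      rw [Phi_right]; rfl
    rw [this, hy]
    simp only [map_mul, mul_assoc]
    group

/-- The rewriting homomorphism from the kernel to the target group. -/
noncomputable def Psi :
    MonoidHom.ker (Monoid.Coprod.lift f' f'') →* Tgt f' f'' where
  toFun n := (Phi f' f'' hf' hf'' (n : Monoid.Coprod G' G'')).left 1
  map_one' := by simp
  map_mul' n m := by
    have h1 : (Phi f' f'' hf' hf'' (n : Monoid.Coprod G' G'')).right = 1 := by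
      rw [Phi_right]; exact n.2
    show (Phi f' f'' hf' hf'' ((n : Monoid.Coprod G' G'') * (m : Monoid.Coprod G' G''))).left 1 =
      (Phi f' f'' hf' hf'' (n : Monoid.Coprod G' G'')).left 1 *
        (Phi f' f'' hf' hf'' (m : Monoid.Coprod G' G'')).left 1
    rw [map_mul, SemidirectProduct.mul_left, Pi.mul_apply, h1, map_one]
    rfl

lemma comp_psi :
    (Monoid.Coprod.lift f' f'').comp (psi f' f'' hf' hf'') = 1 := by
  apply Monoid.Coprod.hom_ext
  · ext k
    simp only [MonoidHom.comp_apply, psi_inl, Monoid.Coprod.lift_apply_inl,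
      MonoidHom.one_apply]
    exact k.2
  · apply Monoid.Coprod.hom_ext
    · ext k
      simp only [MonoidHom.comp_apply, psi_inr_inl, Monoid.Coprod.lift_apply_inr,
        MonoidHom.one_apply]
      exact k.2
    · apply FreeGroup.ext_hom
      rintro ⟨s, hs⟩
      simp [psi_gen, sec_spec]

lemma psi_mem (t : Tgt f' f'') :
    psi f' f'' hf' hf'' t ∈ MonoidHom.ker (Monoid.Coprod.lift f' f'') := by
  rw [MonoidHom.mem_ker]
  have := DFunLike.congr_fun (comp_psi f' f'' hf' hf'') t
  simpa using this

noncomputable def psi0 : Tgt f' f'' →* MonoidHom.ker (Monoid.Coprod.lift f' f'') :=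
  (psi f' f'' hf' hf'').codRestrict _ (psi_mem f' f'' hf' hf'')

lemma psi0_Psi (n : MonoidHom.ker (Monoid.Coprod.lift f' f'')) :
    psi0 f' f'' hf' hf'' (Psi f' f'' hf' hf'' n) = n := by
  apply Subtype.ext
  show psi f' f'' hf' hf'' ((Phi f' f'' hf' hf'' (n : Monoid.Coprod G' G'')).left 1) = _
  rw [key f' f'' hf' hf'' (n : Monoid.Coprod G' G'') 1]
  rw [show Monoid.Coprod.lift f' f'' (n : Monoid.Coprod G' G'') = 1 from n.2]
  simp [sec_one]

lemma Psi_psi0 :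
    (Psi f' f'' hf' hf'').comp (psi0 f' f'' hf' hf'') = MonoidHom.id _ := by
  apply Monoid.Coprod.hom_ext
  · ext k
    show (Phi f' f'' hf' hf'' (psi f' f'' hf' hf'' (Monoid.Coprod.inl k))).left 1 = _
    rw [psi_inl, Phi, Monoid.Coprod.lift_apply_inl]
    show (xbar f' f'' 1)⁻¹ * Monoid.Coprod.inl (kel f' hf' 1 (k : G')) *
        xbar f' f'' (1 * f' (k : G')) = _
    rw [kel_of_ker f' hf' _ k.2, xbar_one, k.2, mul_one, xbar_one]
    simp
  · apply Monoid.Coprod.hom_ext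
    · ext k
      show (Phi f' f'' hf' hf''
          (psi f' f'' hf' hf'' (Monoid.Coprod.inr (Monoid.Coprod.inl k)))).left 1 = _
      rw [psi_inr_inl, Phi, Monoid.Coprod.lift_apply_inr]
      show Monoid.Coprod.inr (Monoid.Coprod.inl (kel f'' hf'' 1 (k : G''))) = _
      rw [kel_of_ker f'' hf'' _ k.2]
      rfl
    · apply FreeGroup.ext_hom
      rintro ⟨s, hs⟩
      show (Phi f' f'' hf' hf''
          (psi f' f'' hf' hf'' (Monoid.Coprod.inr (Monoid.Coprod.inr (FreeGroup.of _))))).left 1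
        = _
      rw [psi_gen, map_mul, map_inv, Phi, Monoid.Coprod.lift_apply_inl,
        Monoid.Coprod.lift_apply_inr, SemidirectProduct.mul_left, Pi.mul_apply]
      have h1 : (Phi1 f' f'' hf' (sec f' hf' s)).left 1 =
          xbar f' f'' s := by
        show (xbar f' f'' 1)⁻¹ * Monoid.Coprod.inl (kel f' hf' 1 (sec f' hf' s)) *
            xbar f' f'' (1 * f' (sec f' hf' s)) = _
        rw [kel_sec, xbar_one, sec_spec, one_mul]
        simp
      have h2 : (act (Tgt f' f'') S (Phi1 f' f'' hf' (sec f' hf' s)).right)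
          (((Phi2 f' f'' hf'' (sec f'' hf'' s))⁻¹).left) 1 = 1 := by
        show ((Phi2 f' f'' hf'' (sec f'' hf'' s))⁻¹).left (1 * (Phi1 f' f'' hf' (sec f' hf' s)).right) = 1
        rw [SemidirectProduct.inv_left]
        show ((Phi2 f' f'' hf'' (sec f'' hf'' s)).left)⁻¹
            (1 * (Phi1 f' f'' hf' (sec f' hf' s)).right *
              ((Phi2 f' f'' hf'' (sec f'' hf'' s)).right)⁻¹) = 1
        show ((Phi2 f' f'' hf'' (sec f'' hf'' s)).left
            (1 * f' (sec f' hf' s) * (f'' (sec f'' hf'' s))⁻¹))⁻¹ = 1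
        rw [sec_spec, sec_spec, one_mul, mul_inv_cancel]
        show (Monoid.Coprod.inr (Monoid.Coprod.inl (kel f'' hf'' 1 (sec f'' hf'' s))))⁻¹ = 1
        rw [kel_sec]
        simp
      rw [h1, h2, mul_one]
      show xbar f' f'' s = _
      rw [xbar, dif_neg hs]
      rfl

end KerCoprodAux



/-- **Lemma 5.** If `f' : G' → S` and `f'' : G'' → S` are surjective group homomorphisms
with kernels `K'` and `K''`, then the kernel of the induced homomorphism
`f' * f'' : G' * G'' → S` is isomorphic to the free product `K' * K'' * F(S \ {e})`,
where `F(S \ {e})` is the free group on the set of non-identity elements of `S`. -/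
theorem ker_coprod_lift_iso {G' G'' S : Type} [Group G'] [Group G''] [Group S]
    (f' : G' →* S) (f'' : G'' →* S)
    (hf' : Function.Surjective f') (hf'' : Function.Surjective f'') :
    Nonempty ((MonoidHom.ker (Monoid.Coprod.lift f' f'')) ≃*
      Monoid.Coprod (MonoidHom.ker f')
        (Monoid.Coprod (MonoidHom.ker f'') (FreeGroup {s : S // s ≠ 1}))) := by
  exact ⟨MonoidHom.toMulEquiv (KerCoprodAux.Psi f' f'' hf' hf'')
    (KerCoprodAux.psi0 f' f'' hf' hf'')
    (MonoidHom.ext (KerCoprodAux.psi0_Psi f' f'' hf' hf''))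
    (KerCoprodAux.Psi_psi0 f' f'' hf' hf'')⟩
end
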